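/- arXiv:2006.06978 — 10 statements merged into one kernel-verified Lean document; each statement's English description precedes it below -/
import Mathlib

section
/- Let X be a non-negative random variable with survival function F̄ and let X_θ have survival function F̄^θ with θ > 1. Then ξ^w_{α,β}(X_θ) ≤ ξ^w_{α,β}(X) ≤ ξ^w_{α,β}(θX), for β ≥ 1 and β−1 < α < β. -/
open MeasureTheory Set

/-- comparison of GWSE for `X`, `X_θ` (proportional hazards) and `θ•X`
when `θ > 1`. -/
theorem gwse_proportional_hazards_compare (α β θ : ℝ)
    (hβ : 1 ≤ β) (hα1 : β - 1 < α) (hα2 : α < β) (hθ : 1 < θ)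
    (Fbar : ℝ → ℝ)
    (hFrange : ∀ x, 0 ≤ Fbar x ∧ Fbar x ≤ 1)
    (hFanti : Antitone Fbar)
    (hintX : IntegrableOn (fun x => x * Fbar x ^ (α + β - 1)) (Set.Ioi 0))
    (hintθ : IntegrableOn (fun x => x * (Fbar x ^ θ) ^ (α + β - 1)) (Set.Ioi 0))
    (hintS : IntegrableOn (fun x => x * Fbar (x / θ) ^ (α + β - 1)) (Set.Ioi 0))
    (hposX : 0 < ∫ x in Set.Ioi (0:ℝ), x * Fbar x ^ (α + β - 1))
    (hposθ : 0 < ∫ x in Set.Ioi (0:ℝ), x * (Fbar x ^ θ) ^ (α + β - 1))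
    (hposS : 0 < ∫ x in Set.Ioi (0:ℝ), x * Fbar (x / θ) ^ (α + β - 1)) :
    (1 / (β - α)) * Real.log (∫ x in Set.Ioi (0:ℝ), x * (Fbar x ^ θ) ^ (α + β - 1)) ≤
        (1 / (β - α)) * Real.log (∫ x in Set.Ioi (0:ℝ), x * Fbar x ^ (α + β - 1)) ∧
      (1 / (β - α)) * Real.log (∫ x in Set.Ioi (0:ℝ), x * Fbar x ^ (α + β - 1)) ≤
        (1 / (β - α)) * Real.log (∫ x in Set.Ioi (0:ℝ), x * Fbar (x / θ) ^ (α + β - 1)) := by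
  have hc : 0 < α + β - 1 := by nlinarith
  have hba : (0:ℝ) ≤ 1 / (β - α) := by
    have : 0 < β - α := by linarith
    positivity
  have key1 : (∫ x in Set.Ioi (0:ℝ), x * (Fbar x ^ θ) ^ (α + β - 1)) ≤
      ∫ x in Set.Ioi (0:ℝ), x * Fbar x ^ (α + β - 1) := by
    refine setIntegral_mono_on hintθ hintX measurableSet_Ioi ?_
    intro x hx
    have hx0 : (0:ℝ) ≤ x := le_of_lt hx
    refine mul_le_mul_of_nonneg_left ?_ hx0
    have hF0 := (hFrange x).1
    have hF1 := (hFrange x).2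
    have hle : Fbar x ^ θ ≤ Fbar x := by
      rcases eq_or_lt_of_le hF0 with h | h
      · rw [← h, Real.zero_rpow (by linarith : θ ≠ 0)]
      · calc Fbar x ^ θ ≤ Fbar x ^ (1:ℝ) :=
              Real.rpow_le_rpow_of_exponent_ge h hF1 (le_of_lt hθ)
          _ = Fbar x := Real.rpow_one _
    exact Real.rpow_le_rpow (Real.rpow_nonneg hF0 θ) hle (le_of_lt hc)
  have key2 : (∫ x in Set.Ioi (0:ℝ), x * Fbar x ^ (α + β - 1)) ≤
      ∫ x in Set.Ioi (0:ℝ), x * Fbar (x / θ) ^ (α + β - 1) := by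
    refine setIntegral_mono_on hintX hintS measurableSet_Ioi ?_
    intro x hx
    have hx0 : (0:ℝ) ≤ x := le_of_lt hx
    refine mul_le_mul_of_nonneg_left ?_ hx0
    have hxd : x / θ ≤ x := by
      rw [div_le_iff₀ (by linarith)]
      nlinarith [Set.mem_Ioi.mp hx]
    exact Real.rpow_le_rpow (hFrange x).1 (hFanti hxd) (le_of_lt hc)
  constructor
  · exact mul_le_mul_of_nonneg_left (Real.log_le_log hposθ key1) hba
  · exact mul_le_mul_of_nonneg_left (Real.log_le_log hposX key2) hba
end

section
/- For X exponentially distributed with rate λ > 0, the generalized dynamic weighted survival entropy equals ξ^w_{α,β}(X;t) = (1/(β−α))·log[(1 + tλ(α+β−1))/(λ²(α+β−1)²)] for all t ≥ 0. -/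
open MeasureTheory Set

lemma integral_mul_exp_shift (c t : ℝ) (hc : 0 < c) :
    ∫ x in Set.Ioi t, x * Real.exp (-(c * (x - t))) = (1 + t * c) / c ^ 2 := by
  have hmap := (measurePreserving_add_right volume t).setIntegral_preimage_emb
    (measurableEmbedding_addRight t)
    (fun x => x * Real.exp (-(c * (x - t)))) (Set.Ioi t)
  have hpre : (· + t) ⁻¹' Set.Ioi t = Set.Ioi (0 : ℝ) := by
    ext x; simp
  rw [← hmap, hpre]
  have h1 : ∫ x in Set.Ioi (0:ℝ), x * Real.exp (-(c * x)) = 1 / c ^ 2 := by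
    have h := Real.integral_rpow_mul_exp_neg_mul_Ioi (a := 2) (r := c) (by norm_num) hc
    rw [Real.Gamma_two] at h
    have heq : ∀ x ∈ Set.Ioi (0:ℝ),
        x ^ ((2:ℝ) - 1) * Real.exp (-(c * x)) = x * Real.exp (-(c * x)) := by
      intro x hx; norm_num
    rw [setIntegral_congr_fun measurableSet_Ioi heq] at h
    rw [h, Real.rpow_two]
    field_simp
  have h2 : ∫ x in Set.Ioi (0:ℝ), Real.exp (-(c * x)) = 1 / c := by
    have h := Real.integral_rpow_mul_exp_neg_mul_Ioi (a := 1) (r := c) (by norm_num) hc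
    rw [Real.Gamma_one] at h
    have heq : ∀ x ∈ Set.Ioi (0:ℝ),
        x ^ ((1:ℝ) - 1) * Real.exp (-(c * x)) = Real.exp (-(c * x)) := by
      intro x hx; norm_num
    rw [setIntegral_congr_fun measurableSet_Ioi heq] at h
    simpa using h
  have hint1 : IntegrableOn (fun x => x * Real.exp (-(c * x))) (Set.Ioi 0) := by
    have h := integrableOn_rpow_mul_exp_neg_mul_rpow (p := 1) (s := 1) (b := c)
      (by norm_num) (by norm_num) hc
    simpa [Real.rpow_one, neg_mul] using h
  have hint2 : IntegrableOn (fun x => Real.exp (-(c * x))) (Set.Ioi 0) := by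
    simpa [neg_mul] using exp_neg_integrableOn_Ioi (0:ℝ) hc
  have hfun : ∀ x : ℝ, (x + t) * Real.exp (-(c * (x + t - t)))
      = x * Real.exp (-(c * x)) + t * Real.exp (-(c * x)) := by
    intro x; ring_nf
  calc ∫ x in Set.Ioi (0:ℝ), (x + t) * Real.exp (-(c * (x + t - t)))
      = ∫ x in Set.Ioi (0:ℝ), (x * Real.exp (-(c * x)) + t * Real.exp (-(c * x))) := by
        simp_rw [hfun]
    _ = (∫ x in Set.Ioi (0:ℝ), x * Real.exp (-(c * x)))
        + ∫ x in Set.Ioi (0:ℝ), t * Real.exp (-(c * x)) := by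
        exact integral_add hint1 (hint2.const_mul t)
    _ = 1 / c ^ 2 + t * (1 / c) := by rw [h1, integral_const_mul, h2]
    _ = (1 + t * c) / c ^ 2 := by field_simp

/-- GDWSE of the exponential distribution with rate `λ`. -/
theorem gdwse_exponential (α β lam t : ℝ) (hlam : 0 < lam) (ht : 0 ≤ t)
    (hβ : 1 ≤ β) (hα1 : β - 1 < α) (hα2 : α < β) :
    (1 / (β - α)) * Real.log (∫ x in Set.Ioi t,
        x * (Real.exp (-(lam * x)) / Real.exp (-(lam * t))) ^ (α + β - 1)) =
      (1 / (β - α)) * Real.log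
        ((1 + t * lam * (α + β - 1)) / (lam ^ 2 * (α + β - 1) ^ 2)) := by
  have hp : 0 < α + β - 1 := by linarith
  have hc : 0 < lam * (α + β - 1) := mul_pos hlam hp
  congr 2
  have heq : ∀ x : ℝ, x * (Real.exp (-(lam*x)) / Real.exp (-(lam*t))) ^ (α+β-1)
      = x * Real.exp (-(lam*(α+β-1) * (x - t))) := by
    intro x
    rw [← Real.exp_sub, ← Real.exp_mul]
    congr 2
    ring
  simp_rw [heq]
  rw [integral_mul_exp_shift _ t hc]
  rw [mul_pow]
  ring_nf
end

section
/- Let X be a non-negative absolutely continuous random variable with differentiable survival function F̄, density f, and hazard rate λ_F(t) = f(t)/F̄(t). Then for t with F̄(t) > 0, the derivative of the generalized dynamic weighted survival entropy satisfies (β−α)·(d/dt)ξ^w_{α,β}(X;t) = (α+β−1)·λ_F(t) − t·exp[−(β−α)·ξ^w_{α,β}(X;t)]. -/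
open MeasureTheory Set

/-- the derivative of the generalized dynamic weighted survival entropy
satisfies `(β-α)·ξ'(t) = (α+β-1)·λ_F(t) − t·exp[−(β−α)·ξ(t)]`. -/
theorem gdwse_deriv (α β t : ℝ) (ht0 : 0 ≤ t)
    (hβ : 1 ≤ β) (hα1 : β - 1 < α) (hα2 : α < β)
    (Fbar f : ℝ → ℝ)
    (hFpos : ∀ s, 0 < Fbar s)
    (hFderiv : HasDerivAt Fbar (-f t) t)
    (hint : ∀ s, IntegrableOn (fun x => x * Fbar x ^ (α + β - 1)) (Set.Ioi s))
    (hFTC : HasDerivAt (fun s => ∫ x in Set.Ioi s, x * Fbar x ^ (α + β - 1))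
      (-(t * Fbar t ^ (α + β - 1))) t)
    (hpos : 0 < ∫ x in Set.Ioi t, x * Fbar x ^ (α + β - 1)) :
    HasDerivAt
      (fun s => (1 / (β - α)) *
        Real.log (∫ x in Set.Ioi s, x * (Fbar x / Fbar s) ^ (α + β - 1)))
      ((1 / (β - α)) * ((α + β - 1) * (f t / Fbar t) -
        t * Real.exp (-(β - α) * ((1 / (β - α)) *
          Real.log (∫ x in Set.Ioi t, x * (Fbar x / Fbar t) ^ (α + β - 1))))))
      t := by
  set γ := α + β - 1 with hγ
  have hba : (0:ℝ) < β - α := sub_pos.mpr hα2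
  set I : ℝ → ℝ := fun s => ∫ x in Set.Ioi s, x * Fbar x ^ γ with hIdef
  have hI : ∀ s, (∫ x in Set.Ioi s, x * (Fbar x / Fbar s) ^ γ)
      = (Fbar s ^ γ)⁻¹ * I s := by
    intro s
    rw [hIdef, ← integral_const_mul]
    congr 1; ext x
    rw [Real.div_rpow (hFpos x).le (hFpos s).le]
    field_simp
  -- eventually I s > 0
  have hIc : ContinuousAt I t := hFTC.continuousAt
  have hev : ∀ᶠ s in nhds t, 0 < I s := hIc.eventually (eventually_gt_nhds hpos)
  have heq : (fun s => (1 / (β - α)) *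
        Real.log (∫ x in Set.Ioi s, x * (Fbar x / Fbar s) ^ γ))
      =ᶠ[nhds t] (fun s => (1 / (β - α)) * (Real.log (I s) - γ * Real.log (Fbar s))) := by
    filter_upwards [hev] with s hs
    rw [hI s, Real.log_mul (inv_pos.mpr (Real.rpow_pos_of_pos (hFpos s) γ)).ne' hs.ne', Real.log_inv,
      Real.log_rpow (hFpos s)]
    ring
  have h1 : HasDerivAt (fun s => Real.log (I s)) (-(t * Fbar t ^ γ) / I t) t :=
    hFTC.log hpos.ne'
  have h2 : HasDerivAt (fun s => γ * Real.log (Fbar s)) (γ * (-f t / Fbar t)) t :=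
    ((hFderiv.log (hFpos t).ne')).const_mul γ
  have hg : HasDerivAt (fun s => (1 / (β - α)) * (Real.log (I s) - γ * Real.log (Fbar s)))
      ((1 / (β - α)) * (-(t * Fbar t ^ γ) / I t - γ * (-f t / Fbar t))) t :=
    (h1.sub h2).const_mul _
  have := hg.congr_of_eventuallyEq heq
  refine this.congr_deriv ?_
  have hexp : Real.exp (-(β - α) * ((1 / (β - α)) *
      Real.log (∫ x in Set.Ioi t, x * (Fbar x / Fbar t) ^ γ)))
      = Fbar t ^ γ / I t := by
    rw [hI t]
    have h3 : -(β - α) * ((1 / (β - α)) * Real.log ((Fbar t ^ γ)⁻¹ * I t))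
        = -Real.log ((Fbar t ^ γ)⁻¹ * I t) := by
      field_simp
    rw [h3, Real.exp_neg, Real.exp_log (mul_pos (inv_pos.mpr (Real.rpow_pos_of_pos (hFpos t) γ)) hpos)]
    rw [mul_inv, inv_inv]
    ring
  rw [hexp]
  have hIt : I t ≠ 0 := hpos.ne'
  field_simp
  ring
end

section
/- If X and Y are non-negative random variables with F̄(x) ≤ Ḡ(x) for all x ≥ 0 (i.e., X ≤ Y in the usual stochastic order), then ξ^w_{α,β}(X) ≤ ξ^w_{α,β}(Y). -/
open MeasureTheory Set

/-- the usual stochastic order implies the generalized weighted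
survival entropy order. -/
theorem st_order_implies_wse_order (α β : ℝ)
    (hβ : 1 ≤ β) (hα1 : β - 1 < α) (hα2 : α < β)
    (Fbar Gbar : ℝ → ℝ)
    (hFrange : ∀ x, 0 ≤ Fbar x ∧ Fbar x ≤ 1)
    (hGrange : ∀ x, 0 ≤ Gbar x ∧ Gbar x ≤ 1)
    (hst : ∀ x, 0 ≤ x → Fbar x ≤ Gbar x)
    (hintF : IntegrableOn (fun x => x * Fbar x ^ (α + β - 1)) (Set.Ioi 0))
    (hintG : IntegrableOn (fun x => x * Gbar x ^ (α + β - 1)) (Set.Ioi 0))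
    (hposF : 0 < ∫ x in Set.Ioi (0:ℝ), x * Fbar x ^ (α + β - 1))
    (hposG : 0 < ∫ x in Set.Ioi (0:ℝ), x * Gbar x ^ (α + β - 1)) :
    (1 / (β - α)) * Real.log (∫ x in Set.Ioi (0:ℝ), x * Fbar x ^ (α + β - 1)) ≤
      (1 / (β - α)) * Real.log (∫ x in Set.Ioi (0:ℝ), x * Gbar x ^ (α + β - 1)) := by
  have hc : 0 ≤ 1 / (β - α) := by apply div_nonneg zero_le_one; linarith
  apply mul_le_mul_of_nonneg_left _ hc
  apply Real.log_le_log hposF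
  apply setIntegral_mono_on hintF hintG measurableSet_Ioi
  intro x hx
  have hx0 : 0 ≤ x := le_of_lt hx
  exact mul_le_mul_of_nonneg_left
    (Real.rpow_le_rpow (hFrange x).1 (hst x hx0) (by linarith)) hx0
end

section
/- If X and Y are non-negative random variables with hazard rate ordering X ≤_hr Y (i.e., Ḡ(t)/F̄(t) is increasing in t, equivalently F̄(x)/F̄(t) ≤ Ḡ(x)/Ḡ(t) for all x ≥ t), then ξ^w_{α,β}(X;t) ≤ ξ^w_{α,β}(Y;t) for all t with F̄(t) > 0 and Ḡ(t) > 0. -/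
open MeasureTheory Set

/-- the hazard rate order implies the generalized dynamic weighted
survival entropy order at every time `t`. -/
theorem hr_order_implies_dwse_order (α β : ℝ)
    (hβ : 1 ≤ β) (hα1 : β - 1 < α) (hα2 : α < β)
    (Fbar Gbar : ℝ → ℝ)
    (hFrange : ∀ x, 0 ≤ Fbar x ∧ Fbar x ≤ 1)
    (hGrange : ∀ x, 0 ≤ Gbar x ∧ Gbar x ≤ 1)
    (hhr : ∀ t x, 0 ≤ t → t ≤ x → 0 < Fbar t → 0 < Gbar t →
      Fbar x / Fbar t ≤ Gbar x / Gbar t)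
    (hintF : ∀ t, 0 ≤ t →
      IntegrableOn (fun x => x * (Fbar x / Fbar t) ^ (α + β - 1)) (Set.Ioi t))
    (hintG : ∀ t, 0 ≤ t →
      IntegrableOn (fun x => x * (Gbar x / Gbar t) ^ (α + β - 1)) (Set.Ioi t))
    (hposF : ∀ t, 0 ≤ t →
      0 < ∫ x in Set.Ioi t, x * (Fbar x / Fbar t) ^ (α + β - 1))
    (hposG : ∀ t, 0 ≤ t →
      0 < ∫ x in Set.Ioi t, x * (Gbar x / Gbar t) ^ (α + β - 1)) :
    ∀ t, 0 ≤ t → 0 < Fbar t → 0 < Gbar t →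
      (1 / (β - α)) * Real.log (∫ x in Set.Ioi t, x * (Fbar x / Fbar t) ^ (α + β - 1)) ≤
        (1 / (β - α)) * Real.log (∫ x in Set.Ioi t, x * (Gbar x / Gbar t) ^ (α + β - 1)) := by
  intro t ht hF hG
  have hexp : (0:ℝ) ≤ α + β - 1 := by linarith
  have hmono : (∫ x in Set.Ioi t, x * (Fbar x / Fbar t) ^ (α + β - 1)) ≤
      ∫ x in Set.Ioi t, x * (Gbar x / Gbar t) ^ (α + β - 1) := by
    apply setIntegral_mono_on (hintF t ht) (hintG t ht) measurableSet_Ioi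
    intro x hx
    have hxt : t ≤ x := le_of_lt hx
    have hx0 : (0:ℝ) ≤ x := le_trans ht hxt
    have hb : (0:ℝ) ≤ Fbar x / Fbar t := div_nonneg (hFrange x).1 hF.le
    exact mul_le_mul_of_nonneg_left
      (Real.rpow_le_rpow hb (hhr t x ht hxt hF hG) hexp) hx0
  have hc : (0:ℝ) ≤ 1 / (β - α) := le_of_lt (by apply one_div_pos.mpr; linarith)
  exact mul_le_mul_of_nonneg_left
    (Real.log_le_log (hposF t ht) hmono) hc
end

section
/- Let X be a non-negative random variable with survival function F̄ and suppose ξ^w_{α,β}(X;t) = c for all t ≥ 0 for some constant c (where F̄(t) > 0 for all t). If X is absolutely continuous with hazard rate λ_F, then λ_F(t) = t·e^{(α−β)c}/(α+β−1) for all t > 0; i.e., X has a Rayleigh distribution with F̄(t) = e^{−λt²} where λ = e^{(α−β)c}/(2(α+β−1)). Conversely, if F̄(t) = e^{−λt²} with λ > 0, then ξ^w_{α,β}(X;t) is constant in t. -/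
open MeasureTheory Set

/-- The generalized dynamic weighted survival entropy of a random variable with
survival function `Fbar`, at time `t`. -/
noncomputable def gdwse (α β : ℝ) (Fbar : ℝ → ℝ) (t : ℝ) : ℝ :=
  (1 / (β - α)) * Real.log (∫ x in Set.Ioi t, x * (Fbar x / Fbar t) ^ (α + β - 1))

lemma key_integral (a : ℝ) (ha : 0 < a) (t : ℝ) (ht : 0 ≤ t) :
    ∫ x in Set.Ioi t, x * Real.exp (-(a * x ^ 2)) = Real.exp (-(a * t ^ 2)) / (2 * a) := by
  have hderiv : ∀ x ∈ Set.Ici t, HasDerivAt (fun x => -Real.exp (-(a * x ^ 2)) / (2 * a))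
      (x * Real.exp (-(a * x ^ 2))) x := by
    intro x _
    have h1 : HasDerivAt (fun x : ℝ => -(a * x ^ 2)) (-(a * (2 * x))) x := by
      have := ((hasDerivAt_pow 2 x).const_mul a).neg
      exact this.congr_deriv (by norm_num)
    have h2 := (h1.exp.neg).div_const (2 * a)
    refine h2.congr_deriv ?_
    field_simp
  have hnonneg : ∀ x ∈ Set.Ioi t, 0 ≤ x * Real.exp (-(a * x ^ 2)) := fun x hx =>
    mul_nonneg (le_trans ht (le_of_lt hx)) (Real.exp_nonneg _)
  have htend : Filter.Tendsto (fun x => -Real.exp (-(a * x ^ 2)) / (2 * a))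
      Filter.atTop (nhds 0) := by
    have h1 : Filter.Tendsto (fun x : ℝ => -(a * x ^ 2)) Filter.atTop Filter.atBot := by
      apply Filter.tendsto_neg_atBot_iff.mpr
      exact (Filter.tendsto_pow_atTop two_ne_zero).const_mul_atTop ha
    have h2 := (Real.tendsto_exp_atBot.comp h1).neg.div_const (2 * a)
    simpa using h2
  have := integral_Ioi_of_hasDerivAt_of_nonneg' hderiv hnonneg htend
  rw [this]
  field_simp
  ring

lemma rayleigh_gdwse (α β lam : ℝ) (hlam : 0 < lam) (hγ : 0 < α + β - 1) (t : ℝ) (ht : 0 ≤ t) :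
    gdwse α β (fun x => Real.exp (-(lam * x ^ 2))) t =
      (1 / (β - α)) * Real.log (1 / (2 * (lam * (α + β - 1)))) := by
  set γ := α + β - 1 with hγdef
  have hb : 0 < lam * γ := mul_pos hlam hγ
  unfold gdwse
  congr 2
  have heq : ∀ x : ℝ, x * (Real.exp (-(lam * x ^ 2)) / Real.exp (-(lam * t ^ 2))) ^ γ =
      (x * Real.exp (-(lam * γ * x ^ 2))) * Real.exp (lam * γ * t ^ 2) := by
    intro x
    rw [← Real.exp_sub, ← Real.exp_mul, show (-(lam * x ^ 2) - -(lam * t ^ 2)) * γ =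
      -(lam * γ * x ^ 2) + lam * γ * t ^ 2 by ring, Real.exp_add]
    ring
  simp only [← hγdef]
  simp_rw [heq]
  rw [integral_mul_const, key_integral (lam * γ) hb t ht, div_mul_eq_mul_div,
    ← Real.exp_add, neg_add_cancel, Real.exp_zero]

/-- `X` has constant GDWSE iff it has a Rayleigh distribution.
Forward: if `ξ^w_{α,β}(X;t) = c` for all `t ≥ 0`, then the hazard rate satisfies
`λ_F(t) = t·e^{(α−β)c}/(α+β−1)`, i.e. `F̄(t) = e^{−λt²}` with
`λ = e^{(α−β)c}/(2(α+β−1))`.  Converse: a Rayleigh survival function has constant GDWSE. -/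
theorem gdwse_constant_iff_rayleigh (α β : ℝ)
    (hβ : 1 ≤ β) (hα1 : β - 1 < α) (hα2 : α < β) :
    (∀ (Fbar f : ℝ → ℝ) (c : ℝ),
      (∀ t, 0 < Fbar t) →
      -- the hazard rate determines the survival function
      (∀ t, 0 ≤ t → Fbar t = Real.exp (-(∫ u in Set.Ioc (0:ℝ) t, f u / Fbar u))) →
      -- derivative identity for the GDWSE (Theorem 2.3 of the paper)
      (∀ t, 0 < t → (β - α) * deriv (gdwse α β Fbar) t =
        (α + β - 1) * (f t / Fbar t) -
          t * Real.exp (-(β - α) * gdwse α β Fbar t)) →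
      -- constancy of the GDWSE
      (∀ t, 0 ≤ t → gdwse α β Fbar t = c) →
      (∀ t, 0 < t → f t / Fbar t = t * Real.exp ((α - β) * c) / (α + β - 1)) ∧
        (∀ t, 0 ≤ t →
          Fbar t = Real.exp (-(Real.exp ((α - β) * c) / (2 * (α + β - 1))) * t ^ 2)))
    ∧
    (∀ lam : ℝ, 0 < lam → ∀ s t : ℝ, 0 ≤ s → 0 ≤ t →
      gdwse α β (fun x => Real.exp (-(lam * x ^ 2))) s =
        gdwse α β (fun x => Real.exp (-(lam * x ^ 2))) t) := by
  have hγ : 0 < α + β - 1 := by linarith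
  constructor
  · intro Fbar f c hpos hdet hder hconst
    have hrate : ∀ t, 0 < t → f t / Fbar t = t * Real.exp ((α - β) * c) / (α + β - 1) := by
      intro t ht
      have hd0 : deriv (gdwse α β Fbar) t = 0 := by
        have hev : gdwse α β Fbar =ᶠ[nhds t] fun _ => c := by
          filter_upwards [Ioi_mem_nhds ht] with x hx
          exact hconst x (le_of_lt hx)
        rw [hev.deriv_eq, deriv_const]
      have := hder t ht
      rw [hd0, hconst t ht.le, mul_zero] at this
      have hexp : Real.exp (-(β - α) * c) = Real.exp ((α - β) * c) := by ring_nf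
      rw [hexp] at this
      have h2 : (α + β - 1) * (f t / Fbar t) = t * Real.exp ((α - β) * c) := by linarith
      rw [eq_div_iff hγ.ne']
      linarith
    refine ⟨hrate, fun t ht => ?_⟩
    have hint : (∫ u in Set.Ioc (0:ℝ) t, f u / Fbar u) =
        Real.exp ((α - β) * c) / (2 * (α + β - 1)) * t ^ 2 := by
      rw [setIntegral_congr_fun measurableSet_Ioc
        (fun u hu => hrate u hu.1)]
      rw [← intervalIntegral.integral_of_le ht]
      have : ∀ x : ℝ, x * Real.exp ((α - β) * c) / (α + β - 1) =
          x * (Real.exp ((α - β) * c) / (α + β - 1)) := fun x => by ring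
      simp_rw [this]
      rw [intervalIntegral.integral_mul_const, integral_id]
      field_simp
      ring
    rw [hdet t ht, hint]
    congr 1
    ring
  · intro lam hlam s t hs ht
    rw [rayleigh_gdwse α β lam hlam hγ s hs, rayleigh_gdwse α β lam hlam hγ t ht]
end

section
/- Let X and Y be non-negative absolutely continuous random variables with common support [0,∞), cdfs F, G and positive continuous densities f, g. If for all n ≥ 1 the generalized weighted survival entropies of the sample minima agree, ξ^w_{α,β}(X_{1:n}) = ξ^w_{α,β}(Y_{1:n}), then F = G. -/
open MeasureTheory Set Filter

section aux
variable {F f : ℝ → ℝ} {c : ℝ}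

private lemma cdf_mono (hF : ∀ x, HasDerivAt F (f x) x) (hfpos : ∀ x, 0 ≤ x → 0 < f x) :
    StrictMonoOn F (Ici 0) := by
  apply strictMonoOn_of_deriv_pos (convex_Ici 0)
  · exact Continuous.continuousOn (continuous_iff_continuousAt.2 fun x => (hF x).continuousAt)
  · intro x hx
    rw [interior_Ici] at hx
    rw [(hF x).deriv]
    exact hfpos x (le_of_lt hx)

private lemma cdf_lt_one (hF : ∀ x, HasDerivAt F (f x) x) (hfpos : ∀ x, 0 ≤ x → 0 < f x)
    (hFtop : Tendsto F atTop (nhds 1)) : ∀ x, 0 ≤ x → F x < 1 := by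
  have hle : ∀ x, 0 ≤ x → F x ≤ 1 := by
    intro x hx
    refine ge_of_tendsto hFtop ?_
    filter_upwards [eventually_ge_atTop x] with y hy
    rcases eq_or_lt_of_le hy with rfl | h
    · exact le_refl _
    · exact le_of_lt (cdf_mono hF hfpos hx (hx.trans (le_of_lt h)) h)
  intro x hx
  have h1 : F x < F (x + 1) := cdf_mono hF hfpos hx (mem_Ici.2 (by linarith)) (by linarith)
  exact lt_of_lt_of_le h1 (hle _ (by linarith))

private lemma cdf_nonneg (hF : ∀ x, HasDerivAt F (f x) x) (hfpos : ∀ x, 0 ≤ x → 0 < f x)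
    (hF0 : F 0 = 0) : ∀ x, 0 ≤ x → 0 ≤ F x := by
  intro x hx
  rcases eq_or_lt_of_le hx with rfl | h
  · exact le_of_eq hF0.symm
  · rw [← hF0]; exact le_of_lt (cdf_mono hF hfpos (mem_Ici.2 (le_refl 0)) hx h)

end aux

/-- Weierstrass: polynomial approximation on `[0,1]`. -/
private lemma exists_poly_approx (φ : ℝ → ℝ) (hφ : Continuous φ) {ε : ℝ} (hε : 0 < ε) :
    ∃ p : Polynomial ℝ, ∀ t ∈ Icc (0:ℝ) 1, |φ t - p.eval t| ≤ ε := by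
  set Φ : C(Icc (0:ℝ) 1, ℝ) := ⟨fun t => φ t, hφ.comp continuous_subtype_val⟩
  have h := polynomialFunctions_closure_eq_top (0:ℝ) 1
  have hΦ : Φ ∈ (polynomialFunctions (Icc (0:ℝ) 1)).topologicalClosure := by
    rw [h]; trivial
  have hΦ' : Φ ∈ closure ((polynomialFunctions (Icc (0:ℝ) 1)) : Set C(Icc (0:ℝ) 1, ℝ)) := hΦ
  rcases Metric.mem_closure_iff.1 hΦ' ε hε with ⟨g, hg, hdist⟩
  have : g ∈ (polynomialFunctions (Icc (0:ℝ) 1) : Set C(Icc (0:ℝ) 1, ℝ)) := hg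
  rw [polynomialFunctions_coe] at this
  rcases this with ⟨p, rfl⟩
  refine ⟨p, fun t ht => ?_⟩
  have := ContinuousMap.dist_apply_le_dist (f := Φ) (g := p.toContinuousMapOnAlgHom (Icc (0:ℝ) 1)) ⟨t, ht⟩
  have h2 : dist (Φ ⟨t, ht⟩) ((p.toContinuousMapOnAlgHom (Icc (0:ℝ) 1)) ⟨t, ht⟩) ≤ ε :=
    le_of_lt (lt_of_le_of_lt this hdist)
  simpa [Real.dist_eq, Φ, Polynomial.toContinuousMapOnAlgHom, Polynomial.toContinuousMapOn,
    Polynomial.toContinuousMap] using h2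

section aux2
variable {F f : ℝ → ℝ} {c : ℝ}

private lemma S_anti (hmono : StrictMonoOn F (Ici 0)) (hlt1 : ∀ x, 0 ≤ x → F x < 1)
    (hc : 0 < c) : StrictAntiOn (fun x => (1 - F x) ^ c) (Ici 0) := by
  intro x hx y hy hxy
  exact Real.rpow_lt_rpow (by linarith [hlt1 y hy]) (by linarith [hmono hx hy hxy]) hc

private lemma S_tendsto (hFtop : Tendsto F atTop (nhds 1)) (hc : 0 < c) :
    Tendsto (fun x => (1 - F x) ^ c) atTop (nhds 0) := by
  have h1 : Tendsto (fun x => 1 - F x) atTop (nhds 0) := by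
    have := hFtop.const_sub 1
    simpa using this
  have h2 : ContinuousAt (fun t : ℝ => t ^ c) 0 := Real.continuousAt_rpow_const 0 c (Or.inr hc.le)
  have h3 := h2.tendsto.comp h1
  simpa [Function.comp_def, Real.zero_rpow hc.ne'] using h3

/-- existence of a positive root of `(1 - F ·)^c = s` for `s ∈ (0,1)`. -/
private lemma exists_root (hF : ∀ x, HasDerivAt F (f x) x) (hfpos : ∀ x, 0 ≤ x → 0 < f x)
    (hF0 : F 0 = 0) (hFtop : Tendsto F atTop (nhds 1)) (hc : 0 < c)
    {s : ℝ} (hs : s ∈ Ioo (0:ℝ) 1) : ∃ a, 0 < a ∧ (1 - F a) ^ c = s := by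
  have hmono := cdf_mono hF hfpos
  have hlt1 := cdf_lt_one hF hfpos hFtop
  set S : ℝ → ℝ := fun x => (1 - F x) ^ c with hS
  have hScont : Continuous S := by
    have hFc : Continuous F := continuous_iff_continuousAt.2 fun x => (hF x).continuousAt
    exact (Real.continuous_rpow_const hc.le).comp (continuous_const.sub hFc)
  have hS0 : S 0 = 1 := by simp [hS, hF0]
  obtain ⟨X, hX⟩ : ∃ X, 0 < X ∧ S X < s := by
    have := (S_tendsto hFtop hc).eventually (eventually_lt_nhds hs.1)
    rcases (this.and (eventually_gt_atTop 0)).exists with ⟨X, h1, h2⟩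
    exact ⟨X, h2, h1⟩
  have hIcc : s ∈ Icc (S X) (S 0) := ⟨le_of_lt hX.2, by rw [hS0]; exact hs.2.le⟩
  have := intermediate_value_Icc' hX.1.le hScont.continuousOn hIcc
  rcases this with ⟨a, ha, hSa⟩
  refine ⟨a, ?_, hSa⟩
  rcases eq_or_lt_of_le ha.1 with rfl | h
  · exfalso; rw [hS0] at hSa; exact absurd hSa.symm (ne_of_lt hs.2)
  · exact h

/-- level set of S above s is Ioo 0 a. -/
private lemma level_set_eq (hmono : StrictMonoOn F (Ici 0)) (hlt1 : ∀ x, 0 ≤ x → F x < 1)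
    (hc : 0 < c) {s a : ℝ} (ha : 0 < a) (hSa : (1 - F a) ^ c = s) :
    {x : ℝ | x ∈ Ioi (0:ℝ) ∧ s < (1 - F x) ^ c} = Ioo 0 a := by
  have hanti := S_anti hmono hlt1 hc
  ext x
  simp only [mem_setOf_eq, mem_Ioi, mem_Ioo]
  constructor
  · rintro ⟨hx, hsx⟩
    refine ⟨hx, ?_⟩
    by_contra h
    push_neg at h
    rcases eq_or_lt_of_le h with rfl | h2
    · rw [hSa] at hsx; exact lt_irrefl _ hsx
    · have := hanti ha.le (ha.le.trans h) h2
      simp only [] at this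
      rw [hSa] at this; linarith
  · rintro ⟨hx, hxa⟩
    refine ⟨hx, ?_⟩
    have := hanti hx.le (hx.le.trans hxa.le) hxa
    simp only [] at this
    rw [hSa] at this; exact this
end aux2
section aux3
variable {F : ℝ → ℝ} {c : ℝ}

private lemma moment_rewrite (hlt1 : ∀ x, 0 ≤ x → F x < 1) (hc : 0 < c) (m : ℕ) :
    EqOn (fun x => x * (1 - F x) ^ c * ((1 - F x) ^ c) ^ m)
      (fun x => x * (1 - F x) ^ (((m + 1 : ℕ) : ℝ) * c)) (Ioi 0) := by
  intro x hx
  have h0 : (0:ℝ) < 1 - F x := by have := hlt1 x (le_of_lt hx); linarith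
  have h1 : ((1 - F x) ^ c) ^ m = (1 - F x) ^ (c * (m : ℝ)) := by
    rw [Real.rpow_mul h0.le, Real.rpow_natCast]
  simp only []
  rw [h1, mul_assoc, ← Real.rpow_add h0]
  congr 1
  push_cast; ring

private lemma S_mem_Icc (hF0 : F 0 = 0) (hmono : StrictMonoOn F (Ici 0))
    (hlt1 : ∀ x, 0 ≤ x → F x < 1) (hc : 0 < c) :
    ∀ x ∈ Ioi (0:ℝ), (1 - F x) ^ c ∈ Icc (0:ℝ) 1 := by
  intro x hx
  have hx0 : (0:ℝ) ≤ x := le_of_lt hx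
  have h0 : (0:ℝ) < 1 - F x := by have := hlt1 x hx0; linarith
  have h2 : F 0 ≤ F x := by
    rcases eq_or_lt_of_le hx0 with rfl | h
    · exact le_refl _
    · exact le_of_lt (hmono (mem_Ici.2 (le_refl 0)) (mem_Ici.2 hx0) h)
  rw [hF0] at h2
  constructor
  · exact (Real.rpow_pos_of_pos h0 c).le
  · exact Real.rpow_le_one h0.le (by linarith) hc.le

private lemma integrableOn_S_pow (hlt1 : ∀ x, 0 ≤ x → F x < 1) (hc : 0 < c)
    (hint : ∀ n : ℕ, 1 ≤ n → IntegrableOn (fun x => x * (1 - F x) ^ ((n : ℝ) * c)) (Ioi 0))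
    (m : ℕ) :
    IntegrableOn (fun x => x * (1 - F x) ^ c * ((1 - F x) ^ c) ^ m) (Ioi 0) := by
  exact IntegrableOn.congr_fun (hint (m + 1) (Nat.le_add_left 1 m))
    (fun x hx => ((moment_rewrite hlt1 hc m) hx).symm) measurableSet_Ioi

private lemma integrableOn_test (hF : Continuous F) (hF0 : F 0 = 0)
    (hmono : StrictMonoOn F (Ici 0)) (hlt1 : ∀ x, 0 ≤ x → F x < 1) (hc : 0 < c)
    (hint : ∀ n : ℕ, 1 ≤ n → IntegrableOn (fun x => x * (1 - F x) ^ ((n : ℝ) * c)) (Ioi 0))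
    {φ : ℝ → ℝ} (hφ : Continuous φ) {C : ℝ} (hC : ∀ t ∈ Icc (0:ℝ) 1, |φ t| ≤ C) :
    IntegrableOn (fun x => x * (1 - F x) ^ c * φ ((1 - F x) ^ c)) (Ioi 0) := by
  have hbase : IntegrableOn (fun x => x * (1 - F x) ^ c * ((1 - F x) ^ c) ^ 0) (Ioi 0) :=
    integrableOn_S_pow hlt1 hc hint 0
  simp only [pow_zero, mul_one] at hbase
  have hSc : Continuous fun x => (1 - F x) ^ c :=
    (Real.continuous_rpow_const hc.le).comp (continuous_const.sub hF)
  refine Integrable.mono' (hbase.const_mul C) ?_ ?_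
  · exact ((continuous_id.mul hSc).mul (hφ.comp hSc)).aestronglyMeasurable
  · rw [ae_restrict_iff' measurableSet_Ioi]
    filter_upwards with x
    intro hx
    have hmem := S_mem_Icc hF0 hmono hlt1 hc x hx
    have hx0 : (0:ℝ) ≤ x := le_of_lt hx
    have h1 : (0:ℝ) ≤ x * (1 - F x) ^ c := mul_nonneg hx0 hmem.1
    have h2 : |φ ((1 - F x) ^ c)| ≤ C := hC _ hmem
    calc ‖x * (1 - F x) ^ c * φ ((1 - F x) ^ c)‖
        = x * (1 - F x) ^ c * |φ ((1 - F x) ^ c)| := by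
          rw [Real.norm_eq_abs, abs_mul, abs_of_nonneg h1]
      _ ≤ x * (1 - F x) ^ c * C := by
          exact mul_le_mul_of_nonneg_left h2 h1
      _ = C * (x * (1 - F x) ^ c) := by ring

end aux3
section aux4
variable {F G : ℝ → ℝ} {c : ℝ}

private lemma J_poly_expand (hlt1 : ∀ x, 0 ≤ x → F x < 1) (hc : 0 < c)
    (hint : ∀ n : ℕ, 1 ≤ n → IntegrableOn (fun x => x * (1 - F x) ^ ((n : ℝ) * c)) (Ioi 0))
    (p : Polynomial ℝ) :
    ∫ x in Ioi 0, x * (1 - F x) ^ c * p.eval ((1 - F x) ^ c)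
      = ∑ i ∈ Finset.range (p.natDegree + 1),
          p.coeff i * ∫ x in Ioi 0, x * (1 - F x) ^ c * ((1 - F x) ^ c) ^ i := by
  have h1 : ∀ x : ℝ, x * (1 - F x) ^ c * p.eval ((1 - F x) ^ c)
      = ∑ i ∈ Finset.range (p.natDegree + 1),
          p.coeff i * (x * (1 - F x) ^ c * ((1 - F x) ^ c) ^ i) := by
    intro x
    rw [Polynomial.eval_eq_sum_range, Finset.mul_sum]
    exact Finset.sum_congr rfl fun i _ => by ring
  simp_rw [h1]
  rw [integral_finset_sum]
  · exact Finset.sum_congr rfl fun i _ => by rw [integral_const_mul]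
  · intro i _
    exact (integrableOn_S_pow hlt1 hc hint i).const_mul _

private lemma J_poly_eq (hlt1F : ∀ x, 0 ≤ x → F x < 1) (hlt1G : ∀ x, 0 ≤ x → G x < 1)
    (hc : 0 < c)
    (hintF : ∀ n : ℕ, 1 ≤ n → IntegrableOn (fun x => x * (1 - F x) ^ ((n : ℝ) * c)) (Ioi 0))
    (hintG : ∀ n : ℕ, 1 ≤ n → IntegrableOn (fun x => x * (1 - G x) ^ ((n : ℝ) * c)) (Ioi 0))
    (hmom : ∀ n : ℕ, 1 ≤ n → (∫ x in Ioi 0, x * (1 - F x) ^ ((n : ℝ) * c))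
      = ∫ x in Ioi 0, x * (1 - G x) ^ ((n : ℝ) * c))
    (p : Polynomial ℝ) :
    ∫ x in Ioi 0, x * (1 - F x) ^ c * p.eval ((1 - F x) ^ c)
      = ∫ x in Ioi 0, x * (1 - G x) ^ c * p.eval ((1 - G x) ^ c) := by
  rw [J_poly_expand hlt1F hc hintF p, J_poly_expand hlt1G hc hintG p]
  refine Finset.sum_congr rfl fun i _ => ?_
  congr 1
  rw [setIntegral_congr_fun measurableSet_Ioi (moment_rewrite hlt1F hc i),
      setIntegral_congr_fun measurableSet_Ioi (moment_rewrite hlt1G hc i)]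
  exact hmom (i + 1) (Nat.le_add_left 1 i)

private lemma J_diff_bound (hFcont : Continuous F) (hF0 : F 0 = 0)
    (hmono : StrictMonoOn F (Ici 0)) (hlt1 : ∀ x, 0 ≤ x → F x < 1) (hc : 0 < c)
    (hint : ∀ n : ℕ, 1 ≤ n → IntegrableOn (fun x => x * (1 - F x) ^ ((n : ℝ) * c)) (Ioi 0))
    {φ ψ : ℝ → ℝ} (hφ : Continuous φ) (hψ : Continuous ψ) {ε : ℝ}
    (hclose : ∀ t ∈ Icc (0:ℝ) 1, |φ t - ψ t| ≤ ε) :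
    |(∫ x in Ioi 0, x * (1 - F x) ^ c * φ ((1 - F x) ^ c))
        - ∫ x in Ioi 0, x * (1 - F x) ^ c * ψ ((1 - F x) ^ c)|
      ≤ ε * ∫ x in Ioi 0, x * (1 - F x) ^ c := by
  obtain ⟨Cφ, hCφ⟩ := isCompact_Icc.exists_bound_of_continuousOn
    (hφ.continuousOn : ContinuousOn φ (Icc (0:ℝ) 1))
  obtain ⟨Cψ, hCψ⟩ := isCompact_Icc.exists_bound_of_continuousOn
    (hψ.continuousOn : ContinuousOn ψ (Icc (0:ℝ) 1))
  have hiφ := integrableOn_test hFcont hF0 hmono hlt1 hc hint hφ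
    (fun t ht => by simpa [Real.norm_eq_abs] using hCφ t ht)
  have hiψ := integrableOn_test hFcont hF0 hmono hlt1 hc hint hψ
    (fun t ht => by simpa [Real.norm_eq_abs] using hCψ t ht)
  have hbase : IntegrableOn (fun x => x * (1 - F x) ^ c) (Ioi 0) := by
    have := integrableOn_S_pow hlt1 hc hint 0
    simpa using this
  rw [← integral_sub hiφ hiψ]
  have hb : IntegrableOn (fun x => ε * (x * (1 - F x) ^ c)) (Ioi 0) := hbase.const_mul ε
  have key : ‖∫ x in Ioi 0, (x * (1 - F x) ^ c * φ ((1 - F x) ^ c)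
      - x * (1 - F x) ^ c * ψ ((1 - F x) ^ c))‖
      ≤ ∫ x in Ioi 0, ε * (x * (1 - F x) ^ c) := by
    refine norm_integral_le_of_norm_le hb ?_
    rw [ae_restrict_iff' measurableSet_Ioi]
    filter_upwards with x hx
    have hmem := S_mem_Icc hF0 hmono hlt1 hc x hx
    have h1 : (0:ℝ) ≤ x * (1 - F x) ^ c := mul_nonneg (le_of_lt hx) hmem.1
    have h2 : |φ ((1 - F x) ^ c) - ψ ((1 - F x) ^ c)| ≤ ε := hclose _ hmem
    calc ‖x * (1 - F x) ^ c * φ ((1 - F x) ^ c) - x * (1 - F x) ^ c * ψ ((1 - F x) ^ c)‖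
        = x * (1 - F x) ^ c * |φ ((1 - F x) ^ c) - ψ ((1 - F x) ^ c)| := by
          rw [← mul_sub, Real.norm_eq_abs, abs_mul, abs_of_nonneg h1]
      _ ≤ x * (1 - F x) ^ c * ε := mul_le_mul_of_nonneg_left h2 h1
      _ = ε * (x * (1 - F x) ^ c) := by ring
  rw [integral_const_mul] at key
  simpa [Real.norm_eq_abs] using key

private lemma J_cont_eq (hFcont : Continuous F) (hGcont : Continuous G)
    (hF0 : F 0 = 0) (hG0 : G 0 = 0)
    (hmonoF : StrictMonoOn F (Ici 0)) (hmonoG : StrictMonoOn G (Ici 0))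
    (hlt1F : ∀ x, 0 ≤ x → F x < 1) (hlt1G : ∀ x, 0 ≤ x → G x < 1) (hc : 0 < c)
    (hintF : ∀ n : ℕ, 1 ≤ n → IntegrableOn (fun x => x * (1 - F x) ^ ((n : ℝ) * c)) (Ioi 0))
    (hintG : ∀ n : ℕ, 1 ≤ n → IntegrableOn (fun x => x * (1 - G x) ^ ((n : ℝ) * c)) (Ioi 0))
    (hmom : ∀ n : ℕ, 1 ≤ n → (∫ x in Ioi 0, x * (1 - F x) ^ ((n : ℝ) * c))
      = ∫ x in Ioi 0, x * (1 - G x) ^ ((n : ℝ) * c))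
    {φ : ℝ → ℝ} (hφ : Continuous φ) :
    ∫ x in Ioi 0, x * (1 - F x) ^ c * φ ((1 - F x) ^ c)
      = ∫ x in Ioi 0, x * (1 - G x) ^ c * φ ((1 - G x) ^ c) := by
  set JF := ∫ x in Ioi 0, x * (1 - F x) ^ c * φ ((1 - F x) ^ c)
  set JG := ∫ x in Ioi 0, x * (1 - G x) ^ c * φ ((1 - G x) ^ c)
  have hAF : (0:ℝ) ≤ ∫ x in Ioi 0, x * (1 - F x) ^ c := by
    refine setIntegral_nonneg measurableSet_Ioi fun x hx => ?_
    exact mul_nonneg (le_of_lt hx) (S_mem_Icc hF0 hmonoF hlt1F hc x hx).1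
  have hAG : (0:ℝ) ≤ ∫ x in Ioi 0, x * (1 - G x) ^ c := by
    refine setIntegral_nonneg measurableSet_Ioi fun x hx => ?_
    exact mul_nonneg (le_of_lt hx) (S_mem_Icc hG0 hmonoG hlt1G hc x hx).1
  have key : ∀ ε : ℝ, 0 < ε → |JF - JG| ≤ ε * ((∫ x in Ioi 0, x * (1 - F x) ^ c)
      + ∫ x in Ioi 0, x * (1 - G x) ^ c) := by
    intro ε hε
    obtain ⟨p, hp⟩ := exists_poly_approx φ hφ hε
    have h1 := J_diff_bound hFcont hF0 hmonoF hlt1F hc hintF hφ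
      (Polynomial.continuous p) hp
    have h2 := J_diff_bound hGcont hG0 hmonoG hlt1G hc hintG hφ
      (Polynomial.continuous p) hp
    have h3 := J_poly_eq hlt1F hlt1G hc hintF hintG hmom p
    set PF := ∫ x in Ioi 0, x * (1 - F x) ^ c * p.eval ((1 - F x) ^ c) with hPF
    set PG := ∫ x in Ioi 0, x * (1 - G x) ^ c * p.eval ((1 - G x) ^ c) with hPG
    calc |JF - JG| = |(JF - PF) + (PG - JG)| := by rw [h3]; congr 1; ring
      _ ≤ |JF - PF| + |PG - JG| := abs_add_le _ _
      _ = |JF - PF| + |JG - PG| := by rw [abs_sub_comm PG JG]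
      _ ≤ ε * (∫ x in Ioi 0, x * (1 - F x) ^ c) + ε * ∫ x in Ioi 0, x * (1 - G x) ^ c :=
          add_le_add h1 h2
      _ = ε * ((∫ x in Ioi 0, x * (1 - F x) ^ c) + ∫ x in Ioi 0, x * (1 - G x) ^ c) := by ring
  have habs : |JF - JG| = 0 := by
    by_contra h
    have hd : 0 < |JF - JG| := lt_of_le_of_ne (abs_nonneg _) (Ne.symm h)
    set A := (∫ x in Ioi 0, x * (1 - F x) ^ c) + ∫ x in Ioi 0, x * (1 - G x) ^ c with hA
    have hA0 : 0 ≤ A := add_nonneg hAF hAG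
    have hk := key (|JF - JG| / (2 * (A + 1))) (by positivity)
    have hlt : |JF - JG| / (2 * (A + 1)) * A < |JF - JG| := by
      rw [div_mul_eq_mul_div, div_lt_iff₀ (by positivity)]
      nlinarith
    linarith
  have := abs_eq_zero.mp habs
  linarith

end aux4
section aux5
variable {F : ℝ → ℝ} {c : ℝ}

private lemma J_ramp_tendsto (hFcont : Continuous F) (hF0 : F 0 = 0)
    (hmono : StrictMonoOn F (Ici 0)) (hlt1 : ∀ x, 0 ≤ x → F x < 1) (hc : 0 < c)
    (hint : ∀ n : ℕ, 1 ≤ n → IntegrableOn (fun x => x * (1 - F x) ^ ((n : ℝ) * c)) (Ioi 0))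
    {s a : ℝ} (hs : s ∈ Ioo (0:ℝ) 1) (ha : 0 < a) (hSa : (1 - F a) ^ c = s) :
    Tendsto (fun k : ℕ => ∫ x in Ioi 0, x * (1 - F x) ^ c *
        (min 1 (max 0 ((k:ℝ) * ((1 - F x) ^ c - s))) * (max ((1 - F x) ^ c) s)⁻¹))
      atTop (nhds (a ^ 2 / 2)) := by
  have hSc : Continuous fun x => (1 - F x) ^ c :=
    (Real.continuous_rpow_const hc.le).comp (continuous_const.sub hFcont)
  have hbase : IntegrableOn (fun x => x * (1 - F x) ^ c) (Ioi 0) := by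
    have := integrableOn_S_pow hlt1 hc hint 0
    simpa using this
  have hlim : Tendsto (fun k : ℕ => ∫ x in Ioi 0, x * (1 - F x) ^ c *
        (min 1 (max 0 ((k:ℝ) * ((1 - F x) ^ c - s))) * (max ((1 - F x) ^ c) s)⁻¹))
      atTop (nhds (∫ x in Ioi 0, (Ioo (0:ℝ) a).indicator (fun y => y) x)) := by
    refine tendsto_integral_of_dominated_convergence
      (fun x => s⁻¹ * (x * (1 - F x) ^ c)) (fun k => ?_) (hbase.const_mul _) (fun k => ?_) ?_
    · -- measurability
      have hmax : Continuous fun x : ℝ => (max ((1 - F x) ^ c) s)⁻¹ := by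
        refine Continuous.inv₀ (hSc.max continuous_const) fun x => ?_
        exact ne_of_gt (lt_of_lt_of_le hs.1 (le_max_right _ _))
      exact ((continuous_id.mul hSc).mul
        (((continuous_const.min (continuous_const.max
          ((continuous_const.mul (hSc.sub continuous_const))))).mul hmax))).aestronglyMeasurable
    · -- bound
      rw [ae_restrict_iff' measurableSet_Ioi]
      filter_upwards with x hx
      have hmem := S_mem_Icc hF0 hmono hlt1 hc x hx
      set t := (1 - F x) ^ c
      have ht0 : 0 ≤ t := hmem.1
      have hx0 : (0:ℝ) ≤ x := le_of_lt hx
      have hm0 : 0 ≤ min 1 (max 0 ((k:ℝ) * (t - s))) := le_min zero_le_one (le_max_left _ _)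
      have hm1 : min 1 (max 0 ((k:ℝ) * (t - s))) ≤ 1 := min_le_left _ _
      have hi0 : 0 ≤ (max t s)⁻¹ := inv_nonneg.2 (le_trans hs.1.le (le_max_right _ _))
      have hi1 : (max t s)⁻¹ ≤ s⁻¹ := by
        apply inv_anti₀ hs.1 (le_max_right _ _)
      have hnn : 0 ≤ x * t * (min 1 (max 0 ((k:ℝ) * (t - s))) * (max t s)⁻¹) :=
        mul_nonneg (mul_nonneg hx0 ht0) (mul_nonneg hm0 hi0)
      rw [Real.norm_eq_abs, abs_of_nonneg hnn]
      calc x * t * (min 1 (max 0 ((k:ℝ) * (t - s))) * (max t s)⁻¹)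
          ≤ x * t * (1 * s⁻¹) := by
            refine mul_le_mul_of_nonneg_left ?_ (mul_nonneg hx0 ht0)
            exact mul_le_mul hm1 hi1 hi0 zero_le_one
        _ = s⁻¹ * (x * t) := by ring
    · -- pointwise limit
      rw [ae_restrict_iff' measurableSet_Ioi]
      filter_upwards with x hx
      have hlevel := level_set_eq hmono hlt1 hc ha hSa
      set t := (1 - F x) ^ c with htdef
      rcases lt_or_ge s t with hst | hst
      · have hxmem : x ∈ Ioo 0 a := by
          rw [← hlevel]; exact ⟨hx, hst⟩
        rw [indicator_of_mem hxmem]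
        have hev : ∀ᶠ k : ℕ in atTop,
            x * t * (min 1 (max 0 ((k:ℝ) * (t - s))) * (max t s)⁻¹) = x := by
          have htend : Tendsto (fun k : ℕ => (k:ℝ) * (t - s)) atTop atTop :=
            Tendsto.atTop_mul_const (by linarith) tendsto_natCast_atTop_atTop
          filter_upwards [htend.eventually_ge_atTop 1] with k hk
          have h1 : min 1 (max 0 ((k:ℝ) * (t - s))) = 1 :=
            min_eq_left (le_max_of_le_right hk)
          have h2 : max t s = t := max_eq_left hst.le
          have ht0 : t ≠ 0 := ne_of_gt (lt_trans hs.1 hst)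
          rw [h1, h2, one_mul, mul_assoc, mul_inv_cancel₀ ht0, mul_one]
        exact Tendsto.congr' (hev.mono fun k hk => hk.symm) tendsto_const_nhds
      · have hxmem : x ∉ Ioo 0 a := by
          rw [← hlevel]; rintro ⟨-, h2⟩; exact absurd h2 (not_lt.2 hst)
        rw [indicator_of_notMem hxmem]
        have hev : ∀ k : ℕ, x * t * (min 1 (max 0 ((k:ℝ) * (t - s))) * (max t s)⁻¹) = 0 := by
          intro k
          have h1 : (k:ℝ) * (t - s) ≤ 0 :=
            mul_nonpos_of_nonneg_of_nonpos (Nat.cast_nonneg k) (by linarith)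
          have h2 : max 0 ((k:ℝ) * (t - s)) = 0 := max_eq_left h1
          have h3 : min 1 (max 0 ((k:ℝ) * (t - s))) = 0 := by rw [h2]; exact min_eq_right zero_le_one
          rw [h3, zero_mul, mul_zero]
        exact Tendsto.congr (fun k => (hev k).symm) tendsto_const_nhds
  have hval : (∫ x in Ioi 0, (Ioo (0:ℝ) a).indicator (fun y => y) x) = a ^ 2 / 2 := by
    rw [integral_indicator measurableSet_Ioo, Measure.restrict_restrict measurableSet_Ioo,
      inter_eq_self_of_subset_left Ioo_subset_Ioi_self, ← integral_Ioc_eq_integral_Ioo,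
      ← intervalIntegral.integral_of_le ha.le, integral_id]
    ring
  rwa [hval] at hlim

end aux5
/-- if the generalized weighted survival entropies of the sample
minima agree for every sample size `n ≥ 1`, then the two distributions coincide. -/
theorem gwse_minima_characterization (α β : ℝ)
    (hβ : 1 ≤ β) (hα1 : β - 1 < α) (hα2 : α < β)
    (F G f g : ℝ → ℝ)
    (hf : Continuous f) (hg : Continuous g)
    (hfpos : ∀ x, 0 ≤ x → 0 < f x) (hgpos : ∀ x, 0 ≤ x → 0 < g x)
    (hF : ∀ x, HasDerivAt F (f x) x) (hG : ∀ x, HasDerivAt G (g x) x)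
    (hF0 : F 0 = 0) (hG0 : G 0 = 0)
    (hFtop : Tendsto F atTop (nhds 1)) (hGtop : Tendsto G atTop (nhds 1))
    (hint : ∀ n : ℕ, 1 ≤ n →
      IntegrableOn (fun x => x * (1 - F x) ^ ((n : ℝ) * (α + β - 1))) (Set.Ioi 0) ∧
      IntegrableOn (fun x => x * (1 - G x) ^ ((n : ℝ) * (α + β - 1))) (Set.Ioi 0))
    (heq : ∀ n : ℕ, 1 ≤ n →
      (1 / (β - α)) *
          Real.log (∫ x in Set.Ioi (0:ℝ), x * (1 - F x) ^ ((n : ℝ) * (α + β - 1))) =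
        (1 / (β - α)) *
          Real.log (∫ x in Set.Ioi (0:ℝ), x * (1 - G x) ^ ((n : ℝ) * (α + β - 1)))) :
    ∀ x, 0 ≤ x → F x = G x := by
  set c := α + β - 1 with hcdef
  have hc : 0 < c := by rw [hcdef]; linarith
  have hβα : (1 : ℝ) / (β - α) ≠ 0 := one_div_ne_zero (sub_ne_zero.2 (ne_of_gt hα2))
  have hFcont : Continuous F := continuous_iff_continuousAt.2 fun x => (hF x).continuousAt
  have hGcont : Continuous G := continuous_iff_continuousAt.2 fun x => (hG x).continuousAt
  have hmonoF := cdf_mono hF hfpos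
  have hmonoG := cdf_mono hG hgpos
  have hlt1F := cdf_lt_one hF hfpos hFtop
  have hlt1G := cdf_lt_one hG hgpos hGtop
  have hintF : ∀ n : ℕ, 1 ≤ n →
      IntegrableOn (fun x => x * (1 - F x) ^ ((n : ℝ) * c)) (Ioi 0) := fun n hn => (hint n hn).1
  have hintG : ∀ n : ℕ, 1 ≤ n →
      IntegrableOn (fun x => x * (1 - G x) ^ ((n : ℝ) * c)) (Ioi 0) := fun n hn => (hint n hn).2
  have hposF : ∀ n : ℕ, 1 ≤ n → 0 < ∫ x in Ioi 0, x * (1 - F x) ^ ((n : ℝ) * c) := by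
    intro n hn
    rw [setIntegral_pos_iff_support_of_nonneg_ae ?_ (hintF n hn)]
    · refine lt_of_lt_of_le ?_ (measure_mono (subset_inter (fun x hx => ?_) subset_rfl))
      · rw [Real.volume_Ioi]; exact ENNReal.zero_lt_top
      · have h1 : (0:ℝ) < 1 - F x := by have := hlt1F x (le_of_lt hx); linarith
        exact ne_of_gt (mul_pos hx (Real.rpow_pos_of_pos h1 _))
    · filter_upwards [ae_restrict_mem measurableSet_Ioi] with x hx
      have h1 : (0:ℝ) < 1 - F x := by have := hlt1F x (le_of_lt hx); linarith
      exact mul_nonneg (le_of_lt hx) (Real.rpow_nonneg h1.le _)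
  have hposG : ∀ n : ℕ, 1 ≤ n → 0 < ∫ x in Ioi 0, x * (1 - G x) ^ ((n : ℝ) * c) := by
    intro n hn
    rw [setIntegral_pos_iff_support_of_nonneg_ae ?_ (hintG n hn)]
    · refine lt_of_lt_of_le ?_ (measure_mono (subset_inter (fun x hx => ?_) subset_rfl))
      · rw [Real.volume_Ioi]; exact ENNReal.zero_lt_top
      · have h1 : (0:ℝ) < 1 - G x := by have := hlt1G x (le_of_lt hx); linarith
        exact ne_of_gt (mul_pos hx (Real.rpow_pos_of_pos h1 _))
    · filter_upwards [ae_restrict_mem measurableSet_Ioi] with x hx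
      have h1 : (0:ℝ) < 1 - G x := by have := hlt1G x (le_of_lt hx); linarith
      exact mul_nonneg (le_of_lt hx) (Real.rpow_nonneg h1.le _)
  have hmom : ∀ n : ℕ, 1 ≤ n → (∫ x in Ioi 0, x * (1 - F x) ^ ((n : ℝ) * c))
      = ∫ x in Ioi 0, x * (1 - G x) ^ ((n : ℝ) * c) := by
    intro n hn
    have h2 := mul_left_cancel₀ hβα (heq n hn)
    calc (∫ x in Ioi 0, x * (1 - F x) ^ ((n : ℝ) * c))
        = Real.exp (Real.log (∫ x in Ioi 0, x * (1 - F x) ^ ((n : ℝ) * c))) :=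
          (Real.exp_log (hposF n hn)).symm
      _ = Real.exp (Real.log (∫ x in Ioi 0, x * (1 - G x) ^ ((n : ℝ) * c))) := by rw [h2]
      _ = _ := Real.exp_log (hposG n hn)
  intro x hx
  rcases eq_or_lt_of_le hx with rfl | hx'
  · rw [hF0, hG0]
  · set s := (1 - F x) ^ c with hsdef
    have hFx0 : 0 < F x := by
      rw [← hF0]; exact hmonoF (mem_Ici.2 le_rfl) (mem_Ici.2 hx) hx'
    have h1F : 0 < 1 - F x := by have := hlt1F x hx; linarith
    have hs : s ∈ Ioo (0:ℝ) 1 :=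
      ⟨Real.rpow_pos_of_pos h1F c, Real.rpow_lt_one h1F.le (by linarith) hc⟩
    obtain ⟨b, hb, hSb⟩ := exists_root hG hgpos hG0 hGtop hc hs
    have tF := J_ramp_tendsto hFcont hF0 hmonoF hlt1F hc hintF hs hx' hsdef.symm
    have tG := J_ramp_tendsto hGcont hG0 hmonoG hlt1G hc hintG hs hb hSb
    have hφk : ∀ k : ℕ, Continuous fun t : ℝ => min 1 (max 0 ((k:ℝ) * (t - s))) * (max t s)⁻¹ := by
      intro k
      refine Continuous.mul ?_ ?_
      · exact continuous_const.min
          (continuous_const.max (continuous_const.mul (continuous_id.sub continuous_const)))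
      · exact Continuous.inv₀ (continuous_id.max continuous_const)
          fun t => ne_of_gt (lt_of_lt_of_le hs.1 (le_max_right _ _))
    have hseq : (fun k : ℕ => ∫ y in Ioi 0, y * (1 - F y) ^ c *
          (min 1 (max 0 ((k:ℝ) * ((1 - F y) ^ c - s))) * (max ((1 - F y) ^ c) s)⁻¹))
        = fun k : ℕ => ∫ y in Ioi 0, y * (1 - G y) ^ c *
          (min 1 (max 0 ((k:ℝ) * ((1 - G y) ^ c - s))) * (max ((1 - G y) ^ c) s)⁻¹) := by
      funext k
      exact J_cont_eq hFcont hGcont hF0 hG0 hmonoF hmonoG hlt1F hlt1G hc hintF hintG hmom (hφk k)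
    rw [hseq] at tF
    have huni : x ^ 2 / 2 = b ^ 2 / 2 := tendsto_nhds_unique tF tG
    have h2 : (x - b) * (x + b) = 0 := by linear_combination 2 * huni
    have hxb : x = b := by
      rcases mul_eq_zero.1 h2 with h | h
      · linarith
      · linarith
    rw [← hxb] at hSb
    have h1G : 0 < 1 - G x := by have := hlt1G x hx; linarith
    rcases lt_trichotomy (F x) (G x) with h | h | h
    · exfalso
      have := Real.rpow_lt_rpow h1G.le (by linarith : 1 - G x < 1 - F x) hc
      rw [hSb] at this
      exact lt_irrefl _ this
    · exact h
    · exfalso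
      have := Real.rpow_lt_rpow h1F.le (by linarith : 1 - F x < 1 - G x) hc
      rw [← hsdef, hSb] at this
      exact lt_irrefl _ this
end

section
/- Let X be a non-negative absolutely continuous random variable with cdf F, density f, and reversed hazard rate r_F(t) = f(t)/F(t). Then for t > 0 with F(t) > 0, (β−α)·(d/dt)fξ^w_{α,β}(X;t) = t·exp[−(β−α)·fξ^w_{α,β}(X;t)] − (α+β−1)·r_F(t). Consequently, fξ^w_{α,β}(X;t) is increasing (decreasing) in t if and only if r_F(t) ≤ (≥) (t/(α+β−1))·exp[−(β−α)·fξ^w_{α,β}(X;t)]. -/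
open MeasureTheory Set

/-- The generalized dynamic weighted failure entropy of a random variable with
cdf `F`, at time `t`. -/
noncomputable def gdwfe (α β : ℝ) (F : ℝ → ℝ) (t : ℝ) : ℝ :=
  (1 / (β - α)) * Real.log (∫ x in Set.Ioc (0:ℝ) t, x * (F x / F t) ^ (α + β - 1))

private lemma deriv_nonneg_of_monotoneOn {g : ℝ → ℝ} {d t : ℝ} (ht : 0 < t)
    (hm : MonotoneOn g (Set.Ioi 0)) (h : HasDerivAt g d t) : 0 ≤ d := by
  have h' : HasDerivWithinAt g d (Set.Ioi t) t := h.hasDerivWithinAt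
  rw [hasDerivWithinAt_iff_tendsto_slope' (notMem_Ioi_self)] at h'
  refine ge_of_tendsto h' ?_
  filter_upwards [self_mem_nhdsWithin] with x hx
  have hxt : t < x := hx
  rw [slope_def_field]
  exact div_nonneg (sub_nonneg.2 (hm ht (ht.trans hxt) hxt.le)) (sub_nonneg.2 hxt.le)

private lemma deriv_nonpos_of_antitoneOn {g : ℝ → ℝ} {d t : ℝ} (ht : 0 < t)
    (hm : AntitoneOn g (Set.Ioi 0)) (h : HasDerivAt g d t) : d ≤ 0 := by
  have := deriv_nonneg_of_monotoneOn (g := fun x => -g x) (d := -d) ht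
    (fun a ha b hb hab => neg_le_neg (hm ha hb hab)) h.neg
  linarith

/-- the derivative of the GDWFE satisfies
`(β−α)·(fξ^w)'(t) = t·exp[−(β−α)·fξ^w(t)] − (α+β−1)·r_F(t)`; consequently the
GDWFE is increasing (decreasing) on `(0,∞)` iff
`r_F(t) ≤ (≥) (t/(α+β−1))·exp[−(β−α)·fξ^w(t)]`. -/
theorem gdwfe_deriv_and_monotonicity (α β : ℝ)
    (hβ : 1 ≤ β) (hα1 : β - 1 < α) (hα2 : α < β)
    (F f : ℝ → ℝ)
    (hFpos : ∀ t, 0 < t → 0 < F t)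
    (hFderiv : ∀ t, 0 < t → HasDerivAt F (f t) t)
    (hFTC : ∀ t, 0 < t →
      HasDerivAt (fun s => ∫ x in Set.Ioc (0:ℝ) s, x * F x ^ (α + β - 1))
        (t * F t ^ (α + β - 1)) t)
    (hpos : ∀ t, 0 < t → 0 < ∫ x in Set.Ioc (0:ℝ) t, x * F x ^ (α + β - 1)) :
    (∀ t, 0 < t →
      HasDerivAt (gdwfe α β F)
        ((1 / (β - α)) * (t * Real.exp (-(β - α) * gdwfe α β F t) -
          (α + β - 1) * (f t / F t))) t) ∧
    (MonotoneOn (gdwfe α β F) (Set.Ioi 0) ↔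
      ∀ t, 0 < t →
        f t / F t ≤ t / (α + β - 1) * Real.exp (-(β - α) * gdwfe α β F t)) ∧
    (AntitoneOn (gdwfe α β F) (Set.Ioi 0) ↔
      ∀ t, 0 < t →
        f t / F t ≥ t / (α + β - 1) * Real.exp (-(β - α) * gdwfe α β F t)) := by
  set p : ℝ := α + β - 1 with hpdef
  have hp : 0 < p := by simp only [hpdef]; linarith
  have hba : 0 < β - α := by linarith
  set G : ℝ → ℝ := fun s => ∫ x in Set.Ioc (0:ℝ) s, x * F x ^ p with hGdef
  -- rewrite gdwfe
  have key : ∀ s, 0 < s →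
      gdwfe α β F s = (1 / (β - α)) * (Real.log (G s) - p * Real.log (F s)) := by
    intro s hs
    have hFs := hFpos s hs
    have hint : (∫ x in Set.Ioc (0:ℝ) s, x * (F x / F s) ^ p) = G s / F s ^ p := by
      rw [hGdef]
      rw [← integral_div]
      refine setIntegral_congr_fun measurableSet_Ioc (fun x hx => ?_)
      rw [Real.div_rpow (hFpos x hx.1).le hFs.le, mul_div_assoc]
    have hFsp : (0:ℝ) < F s ^ p := Real.rpow_pos_of_pos hFs p
    rw [gdwfe, hint, Real.log_div (ne_of_gt (hpos s hs)) (ne_of_gt hFsp),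
      Real.log_rpow hFs]
  -- exp formula
  have keyE : ∀ s, 0 < s →
      Real.exp (-(β - α) * gdwfe α β F s) = F s ^ p / G s := by
    intro s hs
    have hFsp : (0:ℝ) < F s ^ p := Real.rpow_pos_of_pos (hFpos s hs) p
    have hGs := hpos s hs
    have : -(β - α) * gdwfe α β F s = Real.log (F s ^ p / G s) := by
      rw [key s hs, Real.log_div (ne_of_gt hFsp) (ne_of_gt hGs), Real.log_rpow (hFpos s hs)]
      field_simp
      ring
    rw [this, Real.exp_log (div_pos hFsp hGs)]
  -- derivative
  have hd : ∀ t, 0 < t →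
      HasDerivAt (gdwfe α β F)
        ((1 / (β - α)) * (t * Real.exp (-(β - α) * gdwfe α β F t) -
          p * (f t / F t))) t := by
    intro t ht
    have h1 : HasDerivAt (fun s => Real.log (G s)) (t * F t ^ p / G t) t :=
      (hFTC t ht).log (ne_of_gt (hpos t ht))
    have h2 : HasDerivAt (fun s => p * Real.log (F s)) (p * (f t / F t)) t :=
      ((hFderiv t ht).log (ne_of_gt (hFpos t ht))).const_mul p
    have h3 := (h1.sub h2).const_mul (1 / (β - α))
    have heq : gdwfe α β F =ᶠ[nhds t] fun s =>
        (1 / (β - α)) * (Real.log (G s) - p * Real.log (F s)) := by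
      filter_upwards [Ioi_mem_nhds ht] with s hs
      exact key s hs
    have h4 := HasDerivAt.congr_of_eventuallyEq h3 heq
    refine h4.congr_deriv ?_
    rw [keyE t ht]
    ring
  refine ⟨hd, ?_, ?_⟩
  · constructor
    · intro hm t ht
      have := deriv_nonneg_of_monotoneOn ht hm (hd t ht)
      have h0 : 0 ≤ t * Real.exp (-(β - α) * gdwfe α β F t) - p * (f t / F t) := by
        by_contra hc
        push_neg at hc
        nlinarith [one_div_pos.2 hba]
      rw [div_mul_eq_mul_div, le_div_iff₀ hp]
      nlinarith
    · intro h
      refine monotoneOn_of_deriv_nonneg (convex_Ioi 0)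
        (fun t ht => ((hd t ht).continuousAt).continuousWithinAt)
        (fun t ht => by
          rw [interior_Ioi] at ht
          exact ((hd t ht).differentiableAt).differentiableWithinAt)
        (fun t ht => ?_)
      rw [interior_Ioi] at ht
      rw [(hd t ht).deriv]
      have := h t ht
      rw [div_mul_eq_mul_div, le_div_iff₀ hp] at this
      have h1 : 0 ≤ t * Real.exp (-(β - α) * gdwfe α β F t) - p * (f t / F t) := by
        nlinarith
      positivity
  · constructor
    · intro hm t ht
      have := deriv_nonpos_of_antitoneOn ht hm (hd t ht)
      have h0 : t * Real.exp (-(β - α) * gdwfe α β F t) - p * (f t / F t) ≤ 0 := by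
        by_contra hc
        push_neg at hc
        nlinarith [one_div_pos.2 hba]
      rw [ge_iff_le, div_mul_eq_mul_div, div_le_iff₀ hp]
      nlinarith
    · intro h
      refine antitoneOn_of_deriv_nonpos (convex_Ioi 0)
        (fun t ht => ((hd t ht).continuousAt).continuousWithinAt)
        (fun t ht => by
          rw [interior_Ioi] at ht
          exact ((hd t ht).differentiableAt).differentiableWithinAt)
        (fun t ht => ?_)
      rw [interior_Ioi] at ht
      rw [(hd t ht).deriv]
      have := h t ht
      rw [ge_iff_le, div_mul_eq_mul_div, div_le_iff₀ hp] at this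
      have h1 : t * Real.exp (-(β - α) * gdwfe α β F t) - p * (f t / F t) ≤ 0 := by
        nlinarith
      have h2 : 0 < 1 / (β - α) := one_div_pos.2 hba
      nlinarith
end

section
/- Let X be a non-negative absolutely continuous random variable with density f, finite Shannon entropy H(X) = −∫₀^∞ f(x)·log f(x) dx, and finite E[log X]. Then (β−α)·ξ^w_{α,β}(X) + (α+β−1) ≥ H(X) + E[log X]. -/
open MeasureTheory Set

namespace GwseAux

/-- The (modified) survival function. -/
noncomputable def G (f : ℝ → ℝ) (x : ℝ) : ℝ := ∫ y in Set.Ioi (max x 0), f y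

/-- The law of `X`, as a measure on `ℝ`. -/
noncomputable def nu (f : ℝ → ℝ) : Measure ℝ :=
  (volume.restrict (Set.Ioi 0)).withDensity (fun x => ENNReal.ofReal (f x))

variable {f : ℝ → ℝ}

lemma G_antitone (hf0 : ∀ x, 0 ≤ f x) (hfint : IntegrableOn f (Set.Ioi 0)) :
    Antitone (G f) := by
  intro x y hxy
  have hsub : Set.Ioi (max y 0) ⊆ Set.Ioi (max x 0) :=
    Ioi_subset_Ioi (max_le_max hxy le_rfl)
  have hsub' : Set.Ioi (max x 0) ⊆ Set.Ioi 0 := Ioi_subset_Ioi (le_max_right _ _)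
  exact setIntegral_mono_set (hfint.mono_set hsub')
    (Filter.Eventually.of_forall fun z => hf0 z)
    (HasSubset.Subset.eventuallyLE hsub)

lemma G_nonneg (hf0 : ∀ x, 0 ≤ f x) (x : ℝ) : 0 ≤ G f x :=
  setIntegral_nonneg measurableSet_Ioi fun y _ => hf0 y

lemma G_zero (hfprob : ∫ x in Set.Ioi (0:ℝ), f x = 1) : G f 0 = 1 := by
  simp [G, hfprob]

lemma G_le_one (hf0 : ∀ x, 0 ≤ f x) (hfint : IntegrableOn f (Set.Ioi 0))
    (hfprob : ∫ x in Set.Ioi (0:ℝ), f x = 1) (x : ℝ) : G f x ≤ 1 := by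
  rw [← G_zero hfprob]
  rcases le_or_gt x 0 with h | h
  · have : G f x = G f 0 := by simp [G, max_eq_right h]
    exact this.le
  · exact G_antitone hf0 hfint h.le

lemma G_measurable (hf0 : ∀ x, 0 ≤ f x) (hfint : IntegrableOn f (Set.Ioi 0)) :
    Measurable (G f) := (G_antitone hf0 hfint).measurable

lemma nu_apply (hs : MeasurableSet s) :
    nu f s = ∫⁻ x in s ∩ Set.Ioi 0, ENNReal.ofReal (f x) := by
  rw [nu, withDensity_apply _ hs, Measure.restrict_restrict hs]

lemma nu_Ioi (hf0 : ∀ x, 0 ≤ f x) (hfint : IntegrableOn f (Set.Ioi 0))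
    {x : ℝ} (hx : 0 ≤ x) :
    nu f (Set.Ioi x) = ENNReal.ofReal (G f x) := by
  rw [nu_apply measurableSet_Ioi, Set.inter_eq_left.mpr (Ioi_subset_Ioi hx)]
  rw [G, max_eq_left hx]
  exact (ofReal_integral_eq_lintegral_ofReal (hfint.mono_set (Ioi_subset_Ioi hx))
    (Filter.Eventually.of_forall fun z => hf0 z)).symm

lemma nu_univ (hf0 : ∀ x, 0 ≤ f x) (hfint : IntegrableOn f (Set.Ioi 0))
    (hfprob : ∫ x in Set.Ioi (0:ℝ), f x = 1) : nu f Set.univ = 1 := by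
  rw [nu_apply MeasurableSet.univ, Set.univ_inter,
    ← ofReal_integral_eq_lintegral_ofReal hfint
      (Filter.Eventually.of_forall fun z => hf0 z), hfprob, ENNReal.ofReal_one]

lemma nu_ne_top (hf0 : ∀ x, 0 ≤ f x) (hfint : IntegrableOn f (Set.Ioi 0))
    (hfprob : ∫ x in Set.Ioi (0:ℝ), f x = 1) (s : Set ℝ) : nu f s ≠ ⊤ := by
  refine ((measure_mono (Set.subset_univ s)).trans_lt ?_).ne
  rw [nu_univ hf0 hfint hfprob]
  exact ENNReal.one_lt_top

lemma nu_singleton (b : ℝ) : nu f {b} = 0 := by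
  have hac : nu f ≪ volume :=
    (withDensity_absolutelyContinuous _ _).trans
      (Measure.absolutelyContinuous_of_le Measure.restrict_le_self)
  exact hac (Real.volume_singleton)

lemma nu_Ioi_eq_iSup (b : ℝ) :
    nu f (Set.Ioi b) = ⨆ n : ℕ, nu f (Set.Ioi (b + 1 / (n + 1))) := by
  have hU : Set.Ioi b = ⋃ n : ℕ, Set.Ioi (b + 1 / ((n : ℝ) + 1)) := by
    ext x
    simp only [mem_Ioi, mem_iUnion]
    constructor
    · intro hx
      obtain ⟨n, hn⟩ := exists_nat_one_div_lt (sub_pos.mpr hx)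
      exact ⟨n, by linarith⟩
    · rintro ⟨n, hn⟩
      have : (0:ℝ) < 1 / ((n : ℝ) + 1) := by positivity
      linarith
  rw [hU]
  refine Monotone.measure_iUnion ?_
  intro n m hnm
  apply Ioi_subset_Ioi
  have h1 : (1:ℝ) / ((m:ℝ) + 1) ≤ 1 / ((n:ℝ) + 1) := by
    apply one_div_le_one_div_of_le (by positivity)
    exact_mod_cast by omega
  linarith

lemma G_tendsto_exists (hf0 : ∀ x, 0 ≤ f x) (hfint : IntegrableOn f (Set.Ioi 0))
    (hfprob : ∫ x in Set.Ioi (0:ℝ), f x = 1) {u : ℝ} (hu : 0 < u) :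
    ∃ n : ℕ, G f n < u := by
  by_contra hcon
  push_neg at hcon
  have hI : nu f (⋂ n : ℕ, Set.Ioi (n : ℝ)) = ⨅ n : ℕ, nu f (Set.Ioi (n : ℝ)) := by
    refine Antitone.measure_iInter (fun n m hnm => Ioi_subset_Ioi (by exact_mod_cast hnm))
      (fun n => measurableSet_Ioi.nullMeasurableSet)
      ⟨0, nu_ne_top hf0 hfint hfprob _⟩
  have hempty : (⋂ n : ℕ, Set.Ioi (n : ℝ)) = ∅ := by
    ext x
    simp only [mem_iInter, mem_Ioi, mem_empty_iff_false, iff_false, not_forall, not_lt]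
    obtain ⟨n, hn⟩ := exists_nat_gt x
    exact ⟨n, hn.le⟩
  rw [hempty, measure_empty] at hI
  have hge : ENNReal.ofReal u ≤ ⨅ n : ℕ, nu f (Set.Ioi (n : ℝ)) := by
    refine le_iInf fun n => ?_
    rw [nu_Ioi hf0 hfint (Nat.cast_nonneg n)]
    exact ENNReal.ofReal_le_ofReal (hcon n)
  rw [← hI] at hge
  simp only [nonpos_iff_eq_zero, ENNReal.ofReal_eq_zero] at hge
  linarith

lemma nu_sublevel (hf0 : ∀ x, 0 ≤ f x) (hfint : IntegrableOn f (Set.Ioi 0))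
    (hfprob : ∫ x in Set.Ioi (0:ℝ), f x = 1) {u : ℝ} (hu : u ∈ Set.Ioo (0:ℝ) 1) :
    nu f {x | G f x < u} = ENNReal.ofReal u := by
  obtain ⟨hu0, hu1⟩ := hu
  set S := {x | G f x < u} with hS
  have hanti := G_antitone hf0 hfint
  have hupper : ∀ x ∈ S, ∀ y, x ≤ y → y ∈ S := fun x hx y hxy =>
    lt_of_le_of_lt (hanti hxy) hx
  have hSpos : ∀ x ∈ S, (0:ℝ) < x := by
    intro x hx
    by_contra hle
    push_neg at hle
    have : (0:ℝ) ∈ S := hupper x hx 0 hle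
    rw [hS, mem_setOf_eq, G_zero hfprob] at this
    linarith
  have hne : S.Nonempty := by
    obtain ⟨n, hn⟩ := G_tendsto_exists hf0 hfint hfprob hu0
    exact ⟨n, hn⟩
  have hbdd : BddBelow S := ⟨0, fun x hx => (hSpos x hx).le⟩
  set b := sInf S with hb
  have hb0 : 0 ≤ b := le_csInf hne fun x hx => (hSpos x hx).le
  have hIoiS : Set.Ioi b ⊆ S := by
    intro x hx
    obtain ⟨z, hz, hzx⟩ := (csInf_lt_iff hbdd hne).mp hx
    exact hupper z hz x hzx.le
  have hSIci : S ⊆ Set.Ici b := fun x hx => csInf_le hbdd hx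
  -- upper bound for ν (Ioi b)
  have hub : nu f (Set.Ioi b) ≤ ENNReal.ofReal u := by
    rw [nu_Ioi_eq_iSup]
    refine iSup_le fun n => ?_
    have hmem : b + 1 / ((n:ℝ) + 1) ∈ S := by
      apply hIoiS
      rw [mem_Ioi]
      have : (0:ℝ) < 1 / ((n:ℝ) + 1) := by positivity
      linarith
    rw [nu_Ioi hf0 hfint (by positivity)]
    exact ENNReal.ofReal_le_ofReal hmem.le
  -- ν (Ici b) = ν (Ioi b)
  have hIci_eq : nu f (Set.Ici b) = nu f (Set.Ioi b) := by
    apply le_antisymm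
    · have : Set.Ici b ⊆ {b} ∪ Set.Ioi b := by
        intro x hx
        rcases eq_or_lt_of_le (mem_Ici.mp hx) with h | h
        · exact Or.inl (by simp [h.symm])
        · exact Or.inr h
      calc nu f (Set.Ici b) ≤ nu f ({b} ∪ Set.Ioi b) := measure_mono this
        _ ≤ nu f {b} + nu f (Set.Ioi b) := measure_union_le _ _
        _ = nu f (Set.Ioi b) := by rw [nu_singleton, zero_add]
    · exact measure_mono Ioi_subset_Ici_self
  -- lower bound for ν (Ici b)
  have hlb : ENNReal.ofReal u ≤ nu f (Set.Ici b) := by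
    rcases eq_or_lt_of_le hb0 with hb0' | hb0'
    · rw [hIci_eq, ← hb0', nu_Ioi hf0 hfint le_rfl, G_zero hfprob]
      exact ENNReal.ofReal_le_ofReal hu1.le
    · have hInter : Set.Ici b = ⋂ n : ℕ, Set.Ioi (b - b / ((n:ℝ) + 2)) := by
        ext x
        simp only [mem_Ici, mem_iInter, mem_Ioi]
        constructor
        · intro hx n
          have : (0:ℝ) < b / ((n:ℝ) + 2) := by positivity
          linarith
        · intro h
          by_contra hlt
          push_neg at hlt
          obtain ⟨n, hn⟩ := exists_nat_gt (b / (b - x))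
          have hbx : 0 < b - x := sub_pos.mpr hlt
          have h2 : b / ((n:ℝ) + 2) < b - x := by
            rw [div_lt_iff₀ (by positivity)]
            have : b / (b - x) < (n:ℝ) + 2 := by
              have : (n:ℝ) ≤ (n:ℝ) + 2 := by linarith
              linarith
            calc b = (b / (b - x)) * (b - x) := by field_simp
              _ < ((n:ℝ) + 2) * (b - x) := by
                  apply mul_lt_mul_of_pos_right this hbx
              _ = (b - x) * ((n:ℝ) + 2) := by ring
          have := h n
          linarith
      rw [hInter]
      rw [Antitone.measure_iInter ?hanti
        (fun n => measurableSet_Ioi.nullMeasurableSet)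
        ⟨0, nu_ne_top hf0 hfint hfprob _⟩]
      case hanti =>
        intro n m hnm
        apply Ioi_subset_Ioi
        have : b / ((m:ℝ) + 2) ≤ b / ((n:ℝ) + 2) := by
          apply div_le_div_of_nonneg_left hb0'.le (by positivity)
          exact_mod_cast by omega
        linarith
      refine le_iInf fun n => ?_
      have hpos : (0:ℝ) < b / ((n:ℝ) + 2) := by positivity
      have hge0 : 0 ≤ b - b / ((n:ℝ) + 2) := by
        rw [sub_nonneg, div_le_iff₀ (by positivity)]
        nlinarith
      rw [nu_Ioi hf0 hfint hge0]
      apply ENNReal.ofReal_le_ofReal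
      by_contra hcon
      push_neg at hcon
      have : b - b / ((n:ℝ) + 2) ∈ S := hcon
      have := hSIci this
      rw [mem_Ici] at this
      linarith
  -- combine
  apply le_antisymm
  · calc nu f S ≤ nu f (Set.Ici b) := measure_mono hSIci
      _ = nu f (Set.Ioi b) := hIci_eq
      _ ≤ ENNReal.ofReal u := hub
  · calc ENNReal.ofReal u ≤ nu f (Set.Ici b) := hlb
      _ = nu f (Set.Ioi b) := hIci_eq
      _ ≤ nu f S := measure_mono hIoiS

lemma nu_zeroset (hf0 : ∀ x, 0 ≤ f x) (hfint : IntegrableOn f (Set.Ioi 0))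
    (hfprob : ∫ x in Set.Ioi (0:ℝ), f x = 1) :
    nu f {x | G f x = 0} = 0 := by
  set Z := {x | G f x = 0} with hZ
  have hanti := G_antitone hf0 hfint
  have hupper : ∀ x ∈ Z, ∀ y, x ≤ y → y ∈ Z := by
    intro x hx y hxy
    have h1 : G f y ≤ G f x := hanti hxy
    have h2 : 0 ≤ G f y := G_nonneg hf0 y
    rw [hZ, mem_setOf_eq] at hx ⊢
    linarith [hx ▸ h1]
  rcases Z.eq_empty_or_nonempty with hemp | hne
  · rw [hemp, measure_empty]
  have hZpos : ∀ x ∈ Z, (0:ℝ) < x := by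
    intro x hx
    by_contra hle
    push_neg at hle
    have h0 : (0:ℝ) ∈ Z := hupper x hx 0 hle
    rw [hZ, mem_setOf_eq, G_zero hfprob] at h0
    linarith
  have hbdd : BddBelow Z := ⟨0, fun x hx => (hZpos x hx).le⟩
  set a := sInf Z with ha
  have hIoiZ : Set.Ioi a ⊆ Z := by
    intro x hx
    obtain ⟨z, hz, hzx⟩ := (csInf_lt_iff hbdd hne).mp hx
    exact hupper z hz x hzx.le
  have ha0 : 0 ≤ a := le_csInf hne fun x hx => (hZpos x hx).le
  have hZIci : Z ⊆ Set.Ici a := fun x hx => csInf_le hbdd hx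
  have hIoi0 : nu f (Set.Ioi a) = 0 := by
    rw [nu_Ioi_eq_iSup]
    refine le_antisymm (iSup_le fun n => ?_) zero_le
    have hmem : a + 1 / ((n:ℝ) + 1) ∈ Z := by
      apply hIoiZ
      rw [mem_Ioi]
      have : (0:ℝ) < 1 / ((n:ℝ) + 1) := by positivity
      linarith
    rw [nu_Ioi hf0 hfint (by positivity), hmem]
    simp
  refine le_antisymm ?_ zero_le
  calc nu f Z ≤ nu f (Set.Ici a) := measure_mono hZIci
    _ ≤ nu f ({a} ∪ Set.Ioi a) := by
        apply measure_mono
        intro x hx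
        rcases eq_or_lt_of_le (mem_Ici.mp hx) with h | h
        · exact Or.inl (by simp [h.symm])
        · exact Or.inr h
    _ ≤ nu f {a} + nu f (Set.Ioi a) := measure_union_le _ _
    _ = 0 := by rw [nu_singleton, hIoi0, add_zero]

lemma lintegral_neg_log_G (hf0 : ∀ x, 0 ≤ f x) (hfint : IntegrableOn f (Set.Ioi 0))
    (hfprob : ∫ x in Set.Ioi (0:ℝ), f x = 1) :
    ∫⁻ x, ENNReal.ofReal (-Real.log (G f x)) ∂(nu f) = 1 := by
  have hGm := G_measurable hf0 hfint
  have hnn : ∀ x, 0 ≤ -Real.log (G f x) := fun x =>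
    neg_nonneg.mpr (Real.log_nonpos (G_nonneg hf0 x) (G_le_one hf0 hfint hfprob x))
  rw [lintegral_eq_lintegral_meas_lt (nu f)
    (Filter.Eventually.of_forall hnn)
    ((Real.measurable_log.comp hGm).neg.aemeasurable)]
  have hsets : ∀ t ∈ Set.Ioi (0:ℝ),
      nu f {a | t < -Real.log (G f a)} = ENNReal.ofReal (Real.exp (-t)) := by
    intro t ht
    rw [mem_Ioi] at ht
    have hset_eq : {a | t < -Real.log (G f a)} = {a | 0 < G f a ∧ G f a < Real.exp (-t)} := by
      ext a
      simp only [mem_setOf_eq]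
      constructor
      · intro h
        have hGa : 0 < G f a := by
          rcases eq_or_lt_of_le (G_nonneg hf0 a) with h0 | h0
          · rw [← h0, Real.log_zero, neg_zero] at h; linarith
          · exact h0
        refine ⟨hGa, ?_⟩
        have : Real.log (G f a) < -t := by linarith
        exact (Real.log_lt_iff_lt_exp hGa).mp this
      · rintro ⟨hGa, hlt⟩
        have : Real.log (G f a) < -t := (Real.log_lt_iff_lt_exp hGa).mpr hlt
        linarith
    rw [hset_eq]
    have hsub : nu f {a | 0 < G f a ∧ G f a < Real.exp (-t)}
        = nu f {a | G f a < Real.exp (-t)} := by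
      apply le_antisymm
      · exact measure_mono fun a ha => ha.2
      · have hsubset : {a | G f a < Real.exp (-t)} ⊆
            {a | 0 < G f a ∧ G f a < Real.exp (-t)} ∪ {a | G f a = 0} := by
          intro a ha
          rcases eq_or_lt_of_le (G_nonneg hf0 a) with h0 | h0
          · exact Or.inr h0.symm
          · exact Or.inl ⟨h0, ha⟩
        calc nu f {a | G f a < Real.exp (-t)}
            ≤ nu f ({a | 0 < G f a ∧ G f a < Real.exp (-t)} ∪ {a | G f a = 0}) :=
              measure_mono hsubset
          _ ≤ nu f {a | 0 < G f a ∧ G f a < Real.exp (-t)} + nu f {a | G f a = 0} :=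
              measure_union_le _ _
          _ = nu f {a | 0 < G f a ∧ G f a < Real.exp (-t)} := by
              rw [nu_zeroset hf0 hfint hfprob, add_zero]
    rw [hsub, nu_sublevel hf0 hfint hfprob]
    exact ⟨Real.exp_pos _, Real.exp_lt_one_iff.mpr (by linarith)⟩
  rw [setLIntegral_congr_fun measurableSet_Ioi
    hsets]
  have hexp_int : IntegrableOn (fun t => Real.exp (-t)) (Set.Ioi (0:ℝ)) := by
    have := exp_neg_integrableOn_Ioi (0:ℝ) (b := 1) one_pos
    simpa using this
  rw [← ofReal_integral_eq_lintegral_ofReal hexp_int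
    (Filter.Eventually.of_forall fun t => (Real.exp_pos _).le),
    integral_exp_neg_Ioi_zero, ENNReal.ofReal_one]

lemma integral_f_log_G (hf0 : ∀ x, 0 ≤ f x) (hfint : IntegrableOn f (Set.Ioi 0))
    (hfprob : ∫ x in Set.Ioi (0:ℝ), f x = 1) :
    IntegrableOn (fun x => f x * Real.log (G f x)) (Set.Ioi 0) ∧
    ∫ x in Set.Ioi (0:ℝ), f x * Real.log (G f x) = -1 := by
  have hGm := G_measurable hf0 hfint
  have hnn : ∀ x, 0 ≤ -Real.log (G f x) := fun x =>
    neg_nonneg.mpr (Real.log_nonpos (G_nonneg hf0 x) (G_le_one hf0 hfint hfprob x))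
  have hfaem : AEMeasurable (fun x => ENNReal.ofReal (f x)) (volume.restrict (Set.Ioi 0)) :=
    ENNReal.measurable_ofReal.comp_aemeasurable hfint.aemeasurable
  have key : ∫⁻ x in Set.Ioi (0:ℝ), ENNReal.ofReal (f x * (-Real.log (G f x))) = 1 := by
    have h1 := lintegral_neg_log_G hf0 hfint hfprob
    have hgm : Measurable fun x => ENNReal.ofReal (-Real.log (G f x)) :=
      ENNReal.measurable_ofReal.comp ((Real.measurable_log.comp hGm).neg)
    rw [nu, lintegral_withDensity_eq_lintegral_mul₀ hfaem hgm.aemeasurable] at h1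
    rw [← h1]
    apply lintegral_congr
    intro x
    simp only [Pi.mul_apply]
    rw [ENNReal.ofReal_mul (hf0 x)]
  have hmeas : AEStronglyMeasurable (fun x => f x * (-Real.log (G f x)))
      (volume.restrict (Set.Ioi 0)) :=
    hfint.aestronglyMeasurable.mul
      ((Real.measurable_log.comp hGm).neg.aestronglyMeasurable)
  have hnn' : 0 ≤ᵐ[volume.restrict (Set.Ioi 0)] fun x => f x * (-Real.log (G f x)) :=
    Filter.Eventually.of_forall fun x => mul_nonneg (hf0 x) (hnn x)
  have hint : IntegrableOn (fun x => f x * (-Real.log (G f x))) (Set.Ioi 0) := by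
    refine ⟨hmeas, ?_⟩
    rw [hasFiniteIntegral_iff_ofReal hnn', key]
    exact ENNReal.one_lt_top
  have hval : ∫ x in Set.Ioi (0:ℝ), f x * (-Real.log (G f x)) = 1 := by
    rw [integral_eq_lintegral_of_nonneg_ae hnn' hmeas, key, ENNReal.toReal_one]
  constructor
  · have h2 : IntegrableOn (fun x => -(f x * (-Real.log (G f x)))) (Set.Ioi 0) := hint.neg
    exact h2.congr_fun (fun x _ => by ring) measurableSet_Ioi
  · have : ∫ x in Set.Ioi (0:ℝ), f x * Real.log (G f x)
        = -∫ x in Set.Ioi (0:ℝ), f x * (-Real.log (G f x)) := by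
      rw [← integral_neg]
      apply setIntegral_congr_fun measurableSet_Ioi
      intro x _
      ring
    rw [this, hval]

lemma ae_vanish (hf0 : ∀ x, 0 ≤ f x) (hfint : IntegrableOn f (Set.Ioi 0))
    (hfprob : ∫ x in Set.Ioi (0:ℝ), f x = 1) :
    ∀ᵐ x ∂(volume.restrict (Set.Ioi 0)), G f x = 0 → f x = 0 := by
  have hGm := G_measurable hf0 hfint
  have hZm : MeasurableSet {x | G f x = 0} := hGm (measurableSet_singleton 0)
  have h0 : ∫⁻ x in {x | G f x = 0} ∩ Set.Ioi 0, ENNReal.ofReal (f x) = 0 := by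
    rw [← nu_apply hZm]
    exact nu_zeroset hf0 hfint hfprob
  have haem : AEMeasurable (fun x => ENNReal.ofReal (f x))
      (volume.restrict ({x | G f x = 0} ∩ Set.Ioi 0)) := by
    refine (ENNReal.measurable_ofReal.comp_aemeasurable ?_)
    exact hfint.aemeasurable.mono_measure
      (Measure.restrict_mono inter_subset_right le_rfl)
  have h1 : (fun x => ENNReal.ofReal (f x))
      =ᵐ[(volume.restrict (Set.Ioi 0)).restrict {x | G f x = 0}] 0 := by
    rw [Measure.restrict_restrict hZm]
    exact (lintegral_eq_zero_iff' haem).mp h0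
  have h2 := (ae_restrict_iff' hZm).mp h1
  filter_upwards [h2] with x hx hGx
  have := hx hGx
  simp only [Pi.zero_apply, ENNReal.ofReal_eq_zero] at this
  linarith [hf0 x]

end GwseAux

open GwseAux in
/-- a lower bound for the GWSE in terms of the Shannon entropy
`H(X) = −∫ f log f` and `E[log X]`:
`(β−α)·ξ^w_{α,β}(X) + (α+β−1) ≥ H(X) + E[log X]`. -/
theorem gwse_lower_bound_shannon (α β : ℝ)
    (hβ : 1 ≤ β) (hα1 : β - 1 < α) (hα2 : α < β)
    (f Fbar : ℝ → ℝ)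
    (hf0 : ∀ x, 0 ≤ f x)
    (hfint : IntegrableOn f (Set.Ioi 0))
    (hfprob : ∫ x in Set.Ioi (0:ℝ), f x = 1)
    (hFbar : ∀ x, Fbar x = ∫ y in Set.Ioi x, f y)
    (hH : IntegrableOn (fun x => f x * Real.log (f x)) (Set.Ioi 0))
    (hlogX : IntegrableOn (fun x => f x * Real.log x) (Set.Ioi 0))
    (hint : IntegrableOn (fun x => x * Fbar x ^ (α + β - 1)) (Set.Ioi 0))
    (hpos : 0 < ∫ x in Set.Ioi (0:ℝ), x * Fbar x ^ (α + β - 1)) :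
    (β - α) * ((1 / (β - α)) *
        Real.log (∫ x in Set.Ioi (0:ℝ), x * Fbar x ^ (α + β - 1))) +
      (α + β - 1) ≥
      (-∫ x in Set.Ioi (0:ℝ), f x * Real.log (f x)) +
        ∫ x in Set.Ioi (0:ℝ), f x * Real.log x := by
  set c : ℝ := α + β - 1 with hc_def
  have hc : 0 < c := by simp only [hc_def]; linarith
  have hβα : (0:ℝ) < β - α := by linarith
  -- replace Fbar by G f on Ioi 0
  have hFG : Set.EqOn (fun x => x * Fbar x ^ c) (fun x => x * G f x ^ c) (Set.Ioi 0) := by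
    intro x hx
    rw [mem_Ioi] at hx
    simp only []
    rw [hFbar x, G, max_eq_left hx.le]
  have hIeq : ∫ x in Set.Ioi (0:ℝ), x * Fbar x ^ c = ∫ x in Set.Ioi (0:ℝ), x * G f x ^ c :=
    setIntegral_congr_fun measurableSet_Ioi hFG
  have hintG : IntegrableOn (fun x => x * G f x ^ c) (Set.Ioi 0) :=
    hint.congr_fun hFG measurableSet_Ioi
  set I : ℝ := ∫ x in Set.Ioi (0:ℝ), x * G f x ^ c with hI_def
  have hI : 0 < I := hIeq ▸ hpos
  obtain ⟨hlogGint, hlogGval⟩ := integral_f_log_G hf0 hfint hfprob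
  have hGm := G_measurable hf0 hfint
  -- pointwise (a.e.) Gibbs inequality
  set L : ℝ → ℝ := fun x => f x * Real.log x + c * (f x * Real.log (G f x))
      - Real.log I * f x - f x * Real.log (f x) with hL_def
  set R : ℝ → ℝ := fun x => I⁻¹ * (x * G f x ^ c) - f x with hR_def
  have hae : ∀ᵐ x ∂(volume.restrict (Set.Ioi 0)), L x ≤ R x := by
    filter_upwards [ae_vanish hf0 hfint hfprob,
      ae_restrict_mem measurableSet_Ioi] with x hvan hx
    rw [mem_Ioi] at hx
    by_cases hfx : f x = 0
    · have hLx : L x = 0 := by rw [hL_def]; simp [hfx]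
      have hRx : 0 ≤ R x := by
        rw [hR_def]
        simp only [hfx, sub_zero]
        exact mul_nonneg (inv_nonneg.mpr hI.le)
          (mul_nonneg hx.le (Real.rpow_nonneg (G_nonneg hf0 x) c))
      linarith
    · have hfpos : 0 < f x := lt_of_le_of_ne (hf0 x) (Ne.symm hfx)
      have hGpos : 0 < G f x := by
        rcases eq_or_lt_of_le (G_nonneg hf0 x) with h | h
        · exact absurd (hvan h.symm) hfx
        · exact h
      have hhpos : 0 < x * G f x ^ c := mul_pos hx (Real.rpow_pos_of_pos hGpos c)
      have htpos : 0 < (x * G f x ^ c) / (I * f x) := div_pos hhpos (mul_pos hI hfpos)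
      have key := Real.log_le_sub_one_of_pos htpos
      have expand : Real.log ((x * G f x ^ c) / (I * f x))
          = Real.log x + c * Real.log (G f x) - Real.log I - Real.log (f x) := by
        rw [Real.log_div hhpos.ne' (mul_pos hI hfpos).ne',
          Real.log_mul hx.ne' (Real.rpow_pos_of_pos hGpos c).ne',
          Real.log_mul hI.ne' hfx, Real.log_rpow hGpos]
        ring
      have step : f x * Real.log ((x * G f x ^ c) / (I * f x))
          ≤ f x * ((x * G f x ^ c) / (I * f x) - 1) :=
        mul_le_mul_of_nonneg_left key (hf0 x)
      have lhs_eq : f x * Real.log ((x * G f x ^ c) / (I * f x)) = L x := by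
        rw [expand, hL_def]; ring
      have rhs_eq : f x * ((x * G f x ^ c) / (I * f x) - 1) = R x := by
        rw [hR_def]
        field_simp
      rw [lhs_eq, rhs_eq] at step
      exact step
  -- integrability
  have hLint : IntegrableOn L (Set.Ioi 0) := by
    apply Integrable.sub
    apply Integrable.sub
    exact hlogX.add (hlogGint.const_mul c)
    exact hfint.const_mul (Real.log I)
    exact hH
  have hRint : IntegrableOn R (Set.Ioi 0) := (hintG.const_mul I⁻¹).sub hfint
  have hmono := integral_mono_ae hLint hRint hae
  -- compute both integrals
  have hint2 : Integrable (fun x => c * (f x * Real.log (G f x)))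
      (volume.restrict (Set.Ioi 0)) := hlogGint.const_mul c
  have hint3 : Integrable (fun x => Real.log I * f x)
      (volume.restrict (Set.Ioi 0)) := hfint.const_mul (Real.log I)
  have hint12 : Integrable (fun x => f x * Real.log x + c * (f x * Real.log (G f x)))
      (volume.restrict (Set.Ioi 0)) := hlogX.add hint2
  have hint123 : Integrable
      (fun x => f x * Real.log x + c * (f x * Real.log (G f x)) - Real.log I * f x)
      (volume.restrict (Set.Ioi 0)) := hint12.sub hint3
  have hint4 : Integrable (fun x => I⁻¹ * (x * G f x ^ c))
      (volume.restrict (Set.Ioi 0)) := hintG.const_mul I⁻¹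
  have hLval : ∫ x in Set.Ioi (0:ℝ), L x
      = (∫ x in Set.Ioi (0:ℝ), f x * Real.log x) + c * (-1) - Real.log I * 1
        - ∫ x in Set.Ioi (0:ℝ), f x * Real.log (f x) := by
    rw [hL_def]
    rw [integral_sub hint123 hH, integral_sub hint12 hint3, integral_add hlogX hint2,
      integral_const_mul, integral_const_mul, hlogGval, hfprob]
  have hRval : ∫ x in Set.Ioi (0:ℝ), R x = I⁻¹ * I - 1 := by
    rw [hR_def, integral_sub hint4 hfint, integral_const_mul, hfprob, ← hI_def]
  rw [hLval, hRval, inv_mul_cancel₀ hI.ne'] at hmono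
  -- conclude
  rw [ge_iff_le, hIeq]
  have hlogI : (β - α) * (1 / (β - α) * Real.log I) = Real.log I := by
    field_simp
  rw [hlogI]
  linarith
end

section
/- Let X be a non-negative random variable with support contained in [0, b], survival function F̄, and t < b with F̄(t) > 0. Then ξ^w_{α,β}(X;t) ≤ [∫_t^b h(x)·log h(x) dx] / [(β−α)·∫_t^b h(x) dx] + log(b−t)/(β−α), where h(x) = x·(F̄(x)/F̄(t))^{α+β−1}. -/
open MeasureTheory Set

/-- upper bound for the GDWSE of a random variable with support in
`[0,b]`, via the log-sum inequality, where `h(x) = x·(F̄(x)/F̄(t))^{α+β−1}`. -/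
theorem gdwse_upper_bound (α β t b : ℝ)
    (hβ : 1 ≤ β) (hα1 : β - 1 < α) (hα2 : α < β)
    (htb : t < b) (ht : 0 ≤ t)
    (Fbar : ℝ → ℝ)
    (hFrange : ∀ x, 0 ≤ Fbar x ∧ Fbar x ≤ 1)
    (hFanti : Antitone Fbar)
    (hsupp : ∀ x, b < x → Fbar x = 0)
    (hFt : 0 < Fbar t)
    (hint : IntegrableOn (fun x => x * (Fbar x / Fbar t) ^ (α + β - 1)) (Set.Ioc t b))
    (hintlog : IntegrableOn
      (fun x => x * (Fbar x / Fbar t) ^ (α + β - 1) *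
        Real.log (x * (Fbar x / Fbar t) ^ (α + β - 1))) (Set.Ioc t b))
    (hpos : 0 < ∫ x in Set.Ioc t b, x * (Fbar x / Fbar t) ^ (α + β - 1)) :
    (1 / (β - α)) * Real.log (∫ x in Set.Ioc t b, x * (Fbar x / Fbar t) ^ (α + β - 1)) ≤
      (∫ x in Set.Ioc t b, x * (Fbar x / Fbar t) ^ (α + β - 1) *
          Real.log (x * (Fbar x / Fbar t) ^ (α + β - 1))) /
        ((β - α) * ∫ x in Set.Ioc t b, x * (Fbar x / Fbar t) ^ (α + β - 1)) +
      Real.log (b - t) / (β - α) := by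
  set h : ℝ → ℝ := fun x => x * (Fbar x / Fbar t) ^ (α + β - 1) with hh
  set I : ℝ := ∫ x in Set.Ioc t b, h x with hI
  set J : ℝ := ∫ x in Set.Ioc t b, h x * Real.log (h x) with hJ
  have hβα : 0 < β - α := sub_pos.mpr hα2
  have hbt : (0:ℝ) < b - t := sub_pos.mpr htb
  set μ : Measure ℝ := volume.restrict (Set.Ioc t b) with hμ
  have hμuniv : μ Set.univ = ENNReal.ofReal (b - t) := by
    simp [hμ, Real.volume_Ioc]
  have hμne : μ ≠ 0 := by
    intro h0
    rw [h0] at hμuniv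
    simp at hμuniv
    linarith
  haveI : IsFiniteMeasure μ := by
    constructor; rw [hμuniv]; exact ENNReal.ofReal_lt_top
  haveI : NeZero μ := ⟨hμne⟩
  -- h is a.e. nonneg on μ
  have hhnn : ∀ᵐ x ∂μ, h x ∈ Set.Ici (0:ℝ) := by
    rw [hμ, ae_restrict_iff' measurableSet_Ioc]
    filter_upwards with x hx
    have hx0 : 0 ≤ x := le_trans ht hx.1.le
    have : 0 ≤ (Fbar x / Fbar t) ^ (α + β - 1) :=
      Real.rpow_nonneg (div_nonneg (hFrange x).1 hFt.le) _
    exact mul_nonneg hx0 this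
  have key := Real.convexOn_mul_log.map_average_le
    (Real.continuous_mul_log.continuousOn) isClosed_Ici hhnn hint
    (by exact hintlog)
  have havg : (⨍ x, h x ∂μ) = I / (b - t) := by
    rw [average_eq, measureReal_def, hμuniv, ENNReal.toReal_ofReal hbt.le, smul_eq_mul]
    rw [div_eq_inv_mul]
  have havg2 : (⨍ x, h x * Real.log (h x) ∂μ) = J / (b - t) := by
    rw [average_eq, measureReal_def, hμuniv, ENNReal.toReal_ofReal hbt.le, smul_eq_mul]
    rw [div_eq_inv_mul]
  rw [havg] at key
  have key2 : (I / (b - t)) * Real.log (I / (b - t)) ≤ J / (b - t) := by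
    calc (I / (b - t)) * Real.log (I / (b - t)) ≤ ⨍ x, (fun y => y * Real.log y) (h x) ∂μ := key
    _ = J / (b - t) := havg2
  -- multiply by (b - t)
  have key3 : I * Real.log (I / (b - t)) ≤ J := by
    calc I * Real.log (I / (b - t)) = (b - t) * (I / (b - t) * Real.log (I / (b - t))) := by
          field_simp
    _ ≤ (b - t) * (J / (b - t)) := mul_le_mul_of_nonneg_left key2 hbt.le
    _ = J := by field_simp
  have hlogdiv : Real.log (I / (b - t)) = Real.log I - Real.log (b - t) :=
    Real.log_div (ne_of_gt hpos) (ne_of_gt hbt)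
  rw [hlogdiv] at key3
  -- divide by I
  have key4 : Real.log I - Real.log (b - t) ≤ J / I := by
    rw [le_div_iff₀ hpos]
    linarith [key3, mul_comm I (Real.log I - Real.log (b - t))]
  -- now conclude
  have keyfin : Real.log I ≤ J / I + Real.log (b - t) := by linarith
  calc 1 / (β - α) * Real.log I ≤ 1 / (β - α) * (J / I + Real.log (b - t)) :=
        mul_le_mul_of_nonneg_left keyfin (by positivity)
  _ = J / ((β - α) * I) + Real.log (b - t) / (β - α) := by
        field_simp
end
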